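/- arXiv:2512.10897 — 4 statements merged into one kernel-verified Lean document; each statement's English description precedes it below -/
import Mathlib

section
/- Let d ≥ 1, T > 0, let K ⊆ ℝ^d × ℝ^d be a compact set and Ω ⊆ ℝ^d an open set. Let V : ℝ^d → ℝ be differentiable with Lipschitz gradient, and let (X, Ξ) : ℝ × (ℝ^d × ℝ^d) → ℝ^d × ℝ^d be jointly continuous and such that for every (x, ξ), the curve t ↦ (X(t,(x,ξ)), Ξ(t,(x,ξ))) solves X' = Ξ, Ξ' = −∇V(X) with initial condition (X(0), Ξ(0)) = (x, ξ). Assume the geometric condition: for every (x, ξ) ∈ K there exists t ∈ (0, T) with X(t,(x,ξ)) ∈ Ω. Then there exists a constant C > 0 such that for every (x, ξ) ∈ K one has ∫₀^T 1_Ω(X(t,(x,ξ))) dt ≥ C. -/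
open MeasureTheory Set

/-- Observability inequality for the Liouville (classical Hamiltonian) flow:
under the geometric condition, the time spent by the flow in `Ω` is uniformly
bounded below on the compact set `K`. -/
theorem liouville_observability
    {d : ℕ} (hd : 1 ≤ d) {T : ℝ} (hT : 0 < T)
    (K : Set (EuclideanSpace ℝ (Fin d) × EuclideanSpace ℝ (Fin d)))
    (hK : IsCompact K)
    (Ω : Set (EuclideanSpace ℝ (Fin d))) (hΩ : IsOpen Ω)
    (V : EuclideanSpace ℝ (Fin d) → ℝ) (hV : Differentiable ℝ V)
    (Lg : NNReal) (hLip : LipschitzWith Lg (gradient V))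
    (Φ : ℝ → EuclideanSpace ℝ (Fin d) × EuclideanSpace ℝ (Fin d) →
      EuclideanSpace ℝ (Fin d) × EuclideanSpace ℝ (Fin d))
    (hΦcont : Continuous fun p : ℝ × (EuclideanSpace ℝ (Fin d) × EuclideanSpace ℝ (Fin d)) =>
      Φ p.1 p.2)
    (hΦ0 : ∀ z, Φ 0 z = z)
    (hX : ∀ z t, HasDerivAt (fun s => (Φ s z).1) (Φ t z).2 t)
    (hΞ : ∀ z t, HasDerivAt (fun s => (Φ s z).2) (-(gradient V (Φ t z).1)) t)
    (hGC : ∀ z ∈ K, ∃ t ∈ Ioo 0 T, (Φ t z).1 ∈ Ω) :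
    ∃ C > 0, ∀ z ∈ K,
      C ≤ ∫ t in (0:ℝ)..T, Ω.indicator (fun _ => (1:ℝ)) (Φ t z).1 := by
  classical
  -- integral formula for any z'
  have hval : ∀ z' : EuclideanSpace ℝ (Fin d) × EuclideanSpace ℝ (Fin d),
      (∫ t in (0:ℝ)..T, Ω.indicator (fun _ => (1:ℝ)) (Φ t z').1)
        = (volume (Ioc 0 T ∩ {s : ℝ | (Φ s z').1 ∈ Ω})).toReal := by
    intro z'
    have hS : MeasurableSet {s : ℝ | (Φ s z').1 ∈ Ω} := by
      have hc : Continuous fun s : ℝ => (Φ s z').1 :=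
        Continuous.fst (hΦcont.comp (continuous_id.prodMk continuous_const))
      exact (hΩ.preimage hc).measurableSet
    have hfun : (fun t : ℝ => Ω.indicator (fun _ => (1:ℝ)) (Φ t z').1)
        = ({s : ℝ | (Φ s z').1 ∈ Ω}).indicator (fun _ => (1:ℝ)) := by
      funext t
      by_cases h : (Φ t z').1 ∈ Ω <;> simp [Set.indicator_apply, h]
    rw [hfun, intervalIntegral.integral_of_le hT.le,
      MeasureTheory.setIntegral_indicator hS, setIntegral_const]
    simp
    rfl
  -- key local estimate
  have key : ∀ z ∈ K, ∃ ε > 0, ∀ z' : EuclideanSpace ℝ (Fin d) × EuclideanSpace ℝ (Fin d), dist z' z < ε →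
      ε ≤ ∫ t in (0:ℝ)..T, Ω.indicator (fun _ => (1:ℝ)) (Φ t z').1 := by
    intro z hz
    obtain ⟨t, ⟨ht0, htT⟩, hmem⟩ := hGC z hz
    have hW : IsOpen {p : ℝ × (EuclideanSpace ℝ (Fin d) × EuclideanSpace ℝ (Fin d)) | (Φ p.1 p.2).1 ∈ Ω} :=
      hΩ.preimage hΦcont.fst
    obtain ⟨δ, hδ, hball⟩ := Metric.isOpen_iff.mp hW (t, z) hmem
    set ε := min (δ / 2) (min t (T - t)) with hε
    have hεpos : 0 < ε := by
      refine lt_min (by linarith) (lt_min ht0 (by linarith))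
    have hεδ : ε < δ := lt_of_le_of_lt (min_le_left _ _) (by linarith)
    have hεt : ε ≤ t := (min_le_right _ _).trans (min_le_left _ _)
    have hεT : ε ≤ T - t := (min_le_right _ _).trans (min_le_right _ _)
    refine ⟨ε, hεpos, fun z' hz' => ?_⟩
    rw [hval z']
    have hsub : Ioo (t - ε) (t + ε) ⊆ Ioc 0 T ∩ {s : ℝ | (Φ s z').1 ∈ Ω} := by
      intro s hs
      constructor
      · exact ⟨by cases hs; linarith, by cases hs; linarith⟩
      · have hb : ((s, z') : ℝ × (EuclideanSpace ℝ (Fin d) × EuclideanSpace ℝ (Fin d))) ∈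
            Metric.ball (t, z) δ := by
          rw [Metric.mem_ball, Prod.dist_eq]
          apply max_lt
          · rw [Real.dist_eq, abs_lt]
            exact ⟨by cases hs; linarith, by cases hs; linarith⟩
          · exact lt_trans hz' hεδ
        exact hball hb
    have hfin : volume (Ioc (0:ℝ) T ∩ {s : ℝ | (Φ s z').1 ∈ Ω}) ≠ ⊤ :=
      ((measure_mono inter_subset_left).trans_lt measure_Ioc_lt_top).ne
    have hmono : volume (Ioo (t - ε) (t + ε)) ≤
        volume (Ioc 0 T ∩ {s : ℝ | (Φ s z').1 ∈ Ω}) := measure_mono hsub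
    have htoReal := ENNReal.toReal_mono hfin hmono
    rw [Real.volume_Ioo] at htoReal
    have : t + ε - (t - ε) = 2 * ε := by ring
    rw [this, ENNReal.toReal_ofReal (by linarith)] at htoReal
    linarith
  choose! ε hεpos hεint using key
  obtain ⟨s, hsK, hscov⟩ := hK.elim_nhds_subcover (fun z => Metric.ball z (ε z))
    (fun z hz => Metric.ball_mem_nhds z (hεpos z hz))
  rcases s.eq_empty_or_nonempty with hs | hs
  · refine ⟨1, one_pos, fun z hz => ?_⟩
    exfalso
    have := hscov hz
    simp [hs] at this
  · refine ⟨s.inf' hs ε, ?_, ?_⟩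
    · exact (Finset.lt_inf'_iff hs).mpr fun b hb => hεpos b (hsK b hb)
    · intro z hz
      obtain ⟨w, hw, hzw⟩ := Set.mem_iUnion₂.mp (hscov hz)
      exact le_trans (Finset.inf'_le _ hw)
        (hεint w (hsK w hw) z (Metric.mem_ball.mp hzw))
end

section
/- Let 𝓛 ⊆ ℝ^d be a full-rank lattice with fundamental domain Γ, and let 𝓛* be its reciprocal lattice with measurable fundamental domain Γ*. Then for every Schwartz function u : ℝ^d → ℂ, ∫_{ℝ^d} |u(x)|² dx = (1/vol(Γ*)) ∫_{Γ*} ∫_Γ |Σ_{ℓ ∈ 𝓛} u(x + ℓ) e^{−i k·(x + ℓ)}|² dx dk. -/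
open MeasureTheory

noncomputable section

/-- A set `L ⊆ ℝ^d` is a full-rank lattice if it is the ℤ-span of an ℝ-basis. -/
def IsFullRankLattice {d : ℕ} (L : Set (EuclideanSpace ℝ (Fin d))) : Prop :=
  ∃ a : Module.Basis (Fin d) ℝ (EuclideanSpace ℝ (Fin d)),
    L = {z | ∃ n : Fin d → ℤ, z = ∑ i, (n i : ℝ) • a i}

/-- `Γ` is a measurable fundamental domain for the lattice `L`: almost every point of
`ℝ^d` has a unique translate by `L` lying in `Γ`. -/
def IsFundDomain {d : ℕ} (L Γ : Set (EuclideanSpace ℝ (Fin d))) : Prop :=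
  MeasurableSet Γ ∧
    ∀ᵐ x : EuclideanSpace ℝ (Fin d) ∂volume, ∃! ℓ, ℓ ∈ L ∧ x - ℓ ∈ Γ

/-- The reciprocal (dual) lattice `L* = {K : K·ℓ ∈ 2πℤ for all ℓ ∈ L}`. -/
def dualLattice {d : ℕ} (L : Set (EuclideanSpace ℝ (Fin d))) :
    Set (EuclideanSpace ℝ (Fin d)) :=
  {K | ∀ ℓ ∈ L, ∃ n : ℤ, (inner ℝ K ℓ : ℝ) = 2 * Real.pi * n}

namespace BlochAux

open Complex Submodule Pointwise

variable {d : ℕ}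

local notation "𝔼" => EuclideanSpace ℝ (Fin d)

/-- The set of ℤ-combinations of a basis. -/
def latSet (c : Module.Basis (Fin d) ℝ 𝔼) : Set 𝔼 :=
  {z | ∃ n : Fin d → ℤ, z = ∑ i, (n i : ℝ) • c i}

/-- The corresponding additive subgroup. -/
def latGroup (c : Module.Basis (Fin d) ℝ 𝔼) : AddSubgroup 𝔼 :=
  (Submodule.span ℤ (Set.range ⇑c)).toAddSubgroup

lemma coe_latGroup (c : Module.Basis (Fin d) ℝ 𝔼) : (↑(latGroup c) : Set 𝔼) = latSet c := by
  ext z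
  have hsum : ∀ n : Fin d → ℤ, (∑ i, n i • c i : 𝔼) = ∑ i, (n i : ℝ) • c i :=
    fun n => Finset.sum_congr rfl fun i _ => (Int.cast_smul_eq_zsmul ℝ (n i) (c i)).symm
  constructor
  · intro hz
    obtain ⟨n, hn⟩ := (mem_span_range_iff_exists_fun ℤ).mp hz
    exact ⟨n, by rw [← hn, hsum]⟩
  · rintro ⟨n, rfl⟩
    exact (mem_span_range_iff_exists_fun ℤ).mpr ⟨n, hsum n⟩

/-- The parametrization of a lattice by integer coordinates. -/
def latEquiv (c : Module.Basis (Fin d) ℝ 𝔼) : (Fin d → ℤ) ≃ (latSet c) :=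
  Equiv.ofBijective (fun n => ⟨∑ i, (n i : ℝ) • c i, n, rfl⟩)
    (by
      constructor
      · intro n m h
        have h0 : (∑ i, (n i : ℝ) • c i : 𝔼) = ∑ i, (m i : ℝ) • c i :=
          congrArg Subtype.val h
        have h' : c.equivFun.symm (fun i => ((n i : ℝ))) =
            c.equivFun.symm (fun i => ((m i : ℝ))) := by
          rw [Module.Basis.equivFun_symm_apply, Module.Basis.equivFun_symm_apply]; exact h0
        have := c.equivFun.symm.injective h'
        funext i
        exact_mod_cast congrFun this i
      · rintro ⟨z, n, rfl⟩; exact ⟨n, rfl⟩)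

@[simp] lemma latEquiv_apply (c : Module.Basis (Fin d) ℝ 𝔼) (n : Fin d → ℤ) :
    ((latEquiv c n : latSet c) : 𝔼) = ∑ i, (n i : ℝ) • c i := rfl

lemma countable_latSet (c : Module.Basis (Fin d) ℝ 𝔼) : Countable (latSet c) :=
  Countable.of_equiv _ (latEquiv c)

/-- A fundamental domain in the sense of `IsFundDomain` is an additive fundamental domain. -/
lemma isAddFundamentalDomain_of (Λ : AddSubgroup 𝔼) (Γ : Set 𝔼)
    (h : IsFundDomain (↑Λ) Γ) : IsAddFundamentalDomain Λ Γ volume := by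
  obtain ⟨hm, hae⟩ := h
  constructor
  · exact hm.nullMeasurableSet
  · filter_upwards [hae] with x hx
    obtain ⟨ℓ, ⟨hℓ, hx1⟩, _⟩ := hx
    refine ⟨⟨-ℓ, neg_mem hℓ⟩, ?_⟩
    show -ℓ + x ∈ Γ
    rwa [neg_add_eq_sub]
  · intro g g' hgg'
    have hbad : volume {x : 𝔼 | ¬ ∃! ℓ, ℓ ∈ (↑Λ : Set 𝔼) ∧ x - ℓ ∈ Γ} = 0 := by
      simpa [ae_iff] using hae
    refine measure_mono_null ?_ hbad
    rintro x ⟨hx1, hx2⟩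
    rw [Set.mem_vadd_set_iff_neg_vadd_mem] at hx1 hx2
    intro hP
    apply hgg'
    have e1 : (↑g : 𝔼) ∈ (↑Λ : Set 𝔼) ∧ x - ↑g ∈ Γ := by
      refine ⟨g.2, ?_⟩
      have : -g +ᵥ x = x - (↑g : 𝔼) := by
        show -(↑g : 𝔼) + x = x - ↑g
        rw [neg_add_eq_sub]
      rwa [this] at hx1
    have e2 : (↑g' : 𝔼) ∈ (↑Λ : Set 𝔼) ∧ x - ↑g' ∈ Γ := by
      refine ⟨g'.2, ?_⟩
      have : -g' +ᵥ x = x - (↑g' : 𝔼) := by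
        show -(↑g' : 𝔼) + x = x - ↑g'
        rw [neg_add_eq_sub]
      rwa [this] at hx2
    exact Subtype.ext (hP.unique e1 e2)

lemma basis_mem_latSet (c : Module.Basis (Fin d) ℝ 𝔼) (i : Fin d) : c i ∈ latSet c := by
  refine ⟨fun j => if j = i then 1 else 0, ?_⟩
  have : ∀ j, (((if j = i then (1:ℤ) else 0) : ℤ) : ℝ) • c j
      = if j = i then c i else 0 := by
    intro j
    by_cases h : j = i
    · subst h; simp
    · simp [h]
  rw [Finset.sum_congr rfl fun j _ => this j]
  simp

/-- Existence of a `2π`-rescaled dual basis. -/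
lemma exists_dual_basis (a : Module.Basis (Fin d) ℝ 𝔼) :
    ∃ b : Module.Basis (Fin d) ℝ 𝔼,
      ∀ i j, (inner ℝ (b j) (a i) : ℝ) = if j = i then 2 * Real.pi else 0 := by
  classical
  let T : 𝔼 →ₗ[ℝ] (Fin d → ℝ) :=
    LinearMap.pi (fun i => (innerSL ℝ (a i)).toLinearMap)
  have hT : ∀ k i, T k i = (inner ℝ (a i) k : ℝ) := fun k i => rfl
  have hinj : Function.Injective T := by
    intro k k' hkk'
    have hz : ∀ i, (inner ℝ (a i) (k - k') : ℝ) = 0 := by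
      intro i
      have := congrFun hkk' i
      rw [hT, hT] at this
      rw [inner_sub_right, this, sub_self]
    set w := k - k' with hw
    have h5 : (inner ℝ (∑ i, a.repr w i • a i) w : ℝ) = 0 := by
      rw [sum_inner]
      exact Finset.sum_eq_zero fun i _ => by
        rw [real_inner_smul_left, hz i, mul_zero]
    rw [Module.Basis.sum_repr] at h5
    exact sub_eq_zero.mp (inner_self_eq_zero.mp h5)
  have hrank : Module.finrank ℝ 𝔼 = Module.finrank ℝ (Fin d → ℝ) := by
    simp [finrank_euclideanSpace_fin]
  let Teq := T.linearEquivOfInjective hinj hrank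
  have hTeq : ∀ k, Teq k = T k := fun k => rfl
  let b0 : Module.Basis (Fin d) ℝ 𝔼 := (Pi.basisFun ℝ (Fin d)).map Teq.symm
  have hb0 : ∀ i j, (inner ℝ (a i) (b0 j) : ℝ) = if i = j then 1 else 0 := by
    intro i j
    have : T (b0 j) = Pi.single j 1 := by
      have : b0 j = Teq.symm (Pi.single j 1) := by
        simp [b0, Module.Basis.map_apply, Pi.basisFun_apply]
      rw [this, ← hTeq, Teq.apply_symm_apply]
    have h6 := congrFun this i
    rw [hT] at h6
    rw [h6, Pi.single_apply]
  have h2pi : ∀ _i : Fin d, IsUnit (2 * Real.pi) := fun _ =>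
    isUnit_iff_ne_zero.mpr (by positivity)
  refine ⟨b0.isUnitSMul h2pi, ?_⟩
  intro i j
  rw [Module.Basis.isUnitSMul_apply, real_inner_smul_left, real_inner_comm, hb0]
  by_cases h : i = j <;> simp [h, eq_comm]

/-- The dual lattice of a full-rank lattice is the lattice of the rescaled dual basis. -/
lemma dualLattice_latSet_eq (a b : Module.Basis (Fin d) ℝ 𝔼)
    (hab : ∀ i j, (inner ℝ (b j) (a i) : ℝ) = if j = i then 2 * Real.pi else 0) :
    dualLattice (latSet a) = latSet b := by
  ext K
  constructor
  · intro hK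
    have key : ∀ i, ∃ n : ℤ, b.repr K i = n := by
      intro i
      obtain ⟨n, hn⟩ := hK (a i) (basis_mem_latSet a i)
      have hcomp : (inner ℝ K (a i) : ℝ) = 2 * Real.pi * b.repr K i := by
        conv_lhs => rw [← Module.Basis.sum_repr b K]
        rw [sum_inner]
        have : ∀ j, (inner ℝ ((b.repr K j) • b j) (a i) : ℝ)
            = if j = i then 2 * Real.pi * b.repr K j else 0 := by
          intro j
          rw [real_inner_smul_left, hab]
          by_cases h : j = i <;> simp [h] <;> ring
        rw [Finset.sum_congr rfl fun j _ => this j]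
        simp
      rw [hcomp] at hn
      have hpi : (2 * Real.pi) ≠ 0 := by positivity
      exact ⟨n, by
        have := mul_left_cancel₀ hpi hn
        exact this⟩
    choose n hn using key
    refine ⟨n, ?_⟩
    conv_lhs => rw [← Module.Basis.sum_repr b K]
    exact Finset.sum_congr rfl fun i _ => by rw [hn i]
  · rintro ⟨n, rfl⟩
    rintro ℓ ⟨m, rfl⟩
    refine ⟨∑ i, n i * m i, ?_⟩
    rw [sum_inner]
    have hterm : ∀ j, (inner ℝ ((n j : ℝ) • b j) (∑ i, (m i : ℝ) • a i) : ℝ)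
        = 2 * Real.pi * (n j * m j) := by
      intro j
      rw [real_inner_smul_left, inner_sum]
      have : ∀ i, (inner ℝ (b j) ((m i : ℝ) • a i) : ℝ)
          = if i = j then 2 * Real.pi * m i else 0 := by
        intro i
        rw [real_inner_smul_right, hab]
        by_cases h : j = i
        · subst h; simp; ring
        · simp [h, Ne.symm h]
      rw [Finset.sum_congr rfl fun i _ => this i]
      simp
      ring
    rw [Finset.sum_congr rfl fun j _ => hterm j, ← Finset.mul_sum]
    push_cast
    ring

end BlochAux

namespace BlochAux
open Complex Submodule Pointwise
section Summability

variable {d : ℕ}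

lemma summable_int_rpow_aux {s : ℝ} (hs : 1 < s) :
    Summable fun m : ℤ => ((1:ℝ) + |(m : ℝ)|) ^ (-s) := by
  have hnat : Summable fun n : ℕ => ((1:ℝ) + (n : ℝ)) ^ (-s) := by
    have h0 := Real.summable_nat_rpow.mpr (by linarith : -s < -1)
    have h1 := (summable_nat_add_iff (f := fun n : ℕ => (n : ℝ) ^ (-s)) 1).mpr h0
    refine h1.congr fun n => ?_
    push_cast
    rw [add_comm]
  rw [summable_int_iff_summable_nat_and_neg]
  constructor
  · refine hnat.congr fun n => ?_
    simp
  · refine hnat.congr fun n => ?_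
    simp

lemma summable_pi_prod (g : ℤ → ℝ) (hg0 : ∀ m, 0 ≤ g m) (hg : Summable g) :
    ∀ k : ℕ, Summable fun n : Fin k → ℤ => ∏ i, g (n i) := by
  intro k
  induction k with
  | zero => exact (hasSum_fintype _).summable
  | succ k ih =>
      have hprod := hg.mul_of_nonneg ih (fun m => hg0 m)
        (fun n => Finset.prod_nonneg fun i _ => hg0 _)
      refine ((Fin.consEquiv fun _ : Fin (k+1) => ℤ).summable_iff).mp ?_
      refine hprod.congr fun p => ?_
      obtain ⟨m, n⟩ := p
      simp only [Function.comp_apply, Fin.prod_univ_succ,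
        Fin.consEquiv_apply, Fin.cons_zero, Fin.cons_succ]

lemma exists_decay (a : Module.Basis (Fin d) ℝ (EuclideanSpace ℝ (Fin d))) (u : SchwartzMap (EuclideanSpace ℝ (Fin d)) ℂ) :
    ∃ W : (Fin d → ℤ) → ℝ, (∀ n, 0 ≤ W n) ∧ Summable W ∧
      ∃ C : ℝ, 0 ≤ C ∧ ∀ (x : EuclideanSpace ℝ (Fin d)) (n : Fin d → ℤ),
        ‖u (x + ∑ i, (n i : ℝ) • a i)‖ ≤ C * (1 + ‖x‖) ^ (d + 1) * W n := by
  classical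
  obtain ⟨Cd, hCd0, hCd⟩ : ∃ C, 0 ≤ C ∧
      ∀ y : EuclideanSpace ℝ (Fin d), (1 + ‖y‖) ^ (d + 1) * ‖u y‖ ≤ C := by
    refine ⟨2 ^ (d+1) *
      ((Finset.Iic ((d+1), 0)).sup fun m => SchwartzMap.seminorm ℝ m.1 m.2) u, by positivity,
      fun y => ?_⟩
    have := SchwartzMap.one_add_le_sup_seminorm_apply (𝕜 := ℝ) (m := ((d+1), 0))
      le_rfl le_rfl u y
    rwa [norm_iteratedFDeriv_zero] at this
  have honep : ∀ y : EuclideanSpace ℝ (Fin d), (0:ℝ) < (1 + ‖y‖) ^ (d + 1) := by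
    intro y
    have : (0:ℝ) < 1 + ‖y‖ := by positivity
    positivity
  have htri : ∀ x y : EuclideanSpace ℝ (Fin d),
      ((1:ℝ) + ‖y‖) ^ (d+1) ≤ (1 + ‖x‖) ^ (d+1) * (1 + ‖x + y‖) ^ (d+1) := by
    intro x y
    rw [← mul_pow]
    refine pow_le_pow_left₀ (by positivity) ?_ _
    have h1 : ‖y‖ ≤ ‖x + y‖ + ‖x‖ := by
      have : y = (x + y) - x := by abel
      calc ‖y‖ = ‖(x + y) - x‖ := by rw [← this]
        _ ≤ ‖x + y‖ + ‖x‖ := norm_sub_le _ _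
    nlinarith [norm_nonneg x, norm_nonneg (x + y), norm_nonneg y]
  have hA : ∀ x y : EuclideanSpace ℝ (Fin d),
      ‖u (x + y)‖ * (1 + ‖y‖) ^ (d+1) ≤ Cd * (1 + ‖x‖) ^ (d+1) := by
    intro x y
    calc ‖u (x + y)‖ * (1 + ‖y‖) ^ (d+1)
        ≤ ‖u (x + y)‖ * ((1 + ‖x‖) ^ (d+1) * (1 + ‖x + y‖) ^ (d+1)) := by
          exact mul_le_mul_of_nonneg_left (htri x y) (norm_nonneg _)
      _ = (1 + ‖x‖) ^ (d+1) * ((1 + ‖x + y‖) ^ (d+1) * ‖u (x + y)‖) := by ring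
      _ ≤ (1 + ‖x‖) ^ (d+1) * Cd := by
          exact mul_le_mul_of_nonneg_left (hCd (x + y)) (by positivity)
      _ = Cd * (1 + ‖x‖) ^ (d+1) := by ring
  rcases Nat.eq_zero_or_pos d with hd | hd
  · -- degenerate case d = 0
    subst hd
    refine ⟨fun _ => 1, fun _ => zero_le_one, (hasSum_fintype _).summable, Cd, hCd0, ?_⟩
    intro x n
    have hx : (∑ i, (n i : ℝ) • a i : EuclideanSpace ℝ (Fin 0)) = 0 := by
      simp
    rw [hx, add_zero, mul_one]
    have h2 := hA x 0
    have h3 : ((1:ℝ) + ‖(0 : EuclideanSpace ℝ (Fin 0))‖) ^ (0+1) = 1 := by simp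
    rw [add_zero, h3, mul_one] at h2
    exact h2
  · set s : ℝ := ((d:ℝ) + 1) / d with hs
    have hd0 : (0:ℝ) < d := by exact_mod_cast hd
    have hs1 : 1 < s := by
      rw [hs, lt_div_iff₀ hd0]
      linarith
    have hs0 : 0 ≤ s := by positivity
    set φ := LinearMap.toContinuousLinearMap
      (a.equivFun : EuclideanSpace ℝ (Fin d) →ₗ[ℝ] (Fin d → ℝ)) with hφ
    set M : ℝ := max 1 ‖φ‖ with hM
    have hM1 : (1:ℝ) ≤ M := le_max_left _ _
    set C1 : ℝ := 2 * M with hC1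
    have hC10 : (0:ℝ) < C1 := by rw [hC1]; linarith
    have hkey : ∀ (n : Fin d → ℤ) (i : Fin d),
        (1 + |(n i : ℝ)|) ≤ C1 * (1 + ‖(∑ j, (n j : ℝ) • a j : EuclideanSpace ℝ (Fin d))‖) := by
      intro n i
      set y : EuclideanSpace ℝ (Fin d) := ∑ j, (n j : ℝ) • a j with hy
      have hyeq : φ y = fun j => (n j : ℝ) := by
        have h7 : y = a.equivFun.symm (fun j => (n j : ℝ)) := by
          rw [Module.Basis.equivFun_symm_apply]
        have h7' : φ y = a.equivFun y := rfl
        rw [h7', h7, LinearEquiv.apply_symm_apply]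
      have h8 : |(n i : ℝ)| ≤ ‖φ y‖ := by
        rw [hyeq]
        simpa using norm_le_pi_norm (fun j => (n j : ℝ)) i
      have h9 : ‖φ y‖ ≤ M * ‖y‖ := by
        refine le_trans (φ.le_opNorm y) ?_
        exact mul_le_mul_of_nonneg_right (le_max_right _ _) (norm_nonneg _)
      have h10 : (0:ℝ) ≤ ‖y‖ := norm_nonneg _
      calc 1 + |(n i:ℝ)| ≤ 1 + M * ‖y‖ := by linarith
        _ ≤ 2 * M * (1 + ‖y‖) := by nlinarith
    set W : (Fin d → ℤ) → ℝ := fun n => (∏ i, (1 + |(n i : ℝ)|)) ^ (-s) with hW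
    have hW0 : ∀ n, 0 ≤ W n := fun n =>
      Real.rpow_nonneg (Finset.prod_nonneg fun i _ => by positivity) _
    have hWs : Summable W := by
      have h11 := summable_pi_prod (fun m => ((1:ℝ) + |(m:ℝ)|) ^ (-s))
        (fun m => Real.rpow_nonneg (by positivity) _) (summable_int_rpow_aux hs1) d
      refine h11.congr fun n => ?_
      rw [Real.finset_prod_rpow _ _ (fun i _ => by positivity) (-s)]
    refine ⟨W, hW0, hWs, Cd * C1 ^ (d+1), by positivity, ?_⟩
    intro x n
    set y : EuclideanSpace ℝ (Fin d) := ∑ j, (n j : ℝ) • a j with hy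
    set P : ℝ := ∏ i, (1 + |(n i : ℝ)|) with hP
    have hP0 : (0:ℝ) < P := Finset.prod_pos fun i _ => by positivity
    have hPs0 : (0:ℝ) < P ^ s := Real.rpow_pos_of_pos hP0 s
    have hz0 : (0:ℝ) < C1 * (1 + ‖y‖) := by positivity
    have h10 : P ≤ (C1 * (1 + ‖y‖)) ^ d := by
      rw [hP]
      calc ∏ i, (1 + |(n i : ℝ)|) ≤ ∏ _i : Fin d, (C1 * (1 + ‖y‖)) :=
            Finset.prod_le_prod (fun i _ => by positivity) (fun i _ => hkey n i)
        _ = (C1 * (1 + ‖y‖)) ^ d := by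
            rw [Finset.prod_const, Finset.card_univ, Fintype.card_fin]
    have h11 : P ^ s ≤ (C1 * (1 + ‖y‖)) ^ (d+1) := by
      have h12 := Real.rpow_le_rpow hP0.le h10 hs0
      rwa [← Real.rpow_natCast (C1 * (1+‖y‖)) d, ← Real.rpow_mul hz0.le,
        (show (d:ℝ) * s = ((d+1 : ℕ) : ℝ) by
          rw [hs]; field_simp; push_cast; ring),
        Real.rpow_natCast] at h12
    have hWn : W n = (P ^ s)⁻¹ := by
      rw [show W n = P ^ (-s) from rfl, Real.rpow_neg hP0.le]
    rw [hWn]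
    have hre : Cd * C1 ^ (d+1) * (1 + ‖x‖) ^ (d+1) * (P ^ s)⁻¹
        = (Cd * C1 ^ (d+1) * (1 + ‖x‖) ^ (d+1)) / P ^ s := by
      rw [div_eq_mul_inv]
    rw [hre, le_div_iff₀ hPs0]
    calc ‖u (x + y)‖ * P ^ s
        ≤ ‖u (x + y)‖ * (C1 * (1 + ‖y‖)) ^ (d+1) :=
          mul_le_mul_of_nonneg_left h11 (norm_nonneg _)
      _ = C1 ^ (d+1) * (‖u (x + y)‖ * (1 + ‖y‖) ^ (d+1)) := by rw [mul_pow]; ring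
      _ ≤ C1 ^ (d+1) * (Cd * (1 + ‖x‖) ^ (d+1)) :=
          mul_le_mul_of_nonneg_left (hA x y) (by positivity)
      _ = Cd * C1 ^ (d+1) * (1 + ‖x‖) ^ (d+1) := by ring

end Summability
end BlochAux

namespace BlochAux
open Complex Submodule Pointwise

variable {d : ℕ}

lemma setIntegral_exp_eq_zero
    (Lset : Set (EuclideanSpace ℝ (Fin d)))
    (Λs : AddSubgroup (EuclideanSpace ℝ (Fin d))) [Countable Λs]
    (hcoe : (↑Λs : Set (EuclideanSpace ℝ (Fin d))) = dualLattice Lset)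
    (Γs : Set (EuclideanSpace ℝ (Fin d)))
    (FDs : IsAddFundamentalDomain Λs Γs volume)
    (w : EuclideanSpace ℝ (Fin d)) (hw : w ∈ Lset) (hw0 : w ≠ 0) :
    ∫ k in Γs, Complex.exp (-Complex.I * ((inner ℝ k w : ℝ) : ℂ)) = 0 := by
  set f : EuclideanSpace ℝ (Fin d) → ℂ :=
    fun k => Complex.exp (-Complex.I * ((inner ℝ k w : ℝ) : ℂ)) with hf
  have hper : ∀ (g : Λs) (k : EuclideanSpace ℝ (Fin d)), f (g +ᵥ k) = f k := by
    intro g k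
    have hg : (↑g : EuclideanSpace ℝ (Fin d)) ∈ dualLattice Lset := by
      rw [← hcoe]; exact g.2
    obtain ⟨n, hn⟩ := hg w hw
    show f ((↑g : EuclideanSpace ℝ (Fin d)) + k) = f k
    rw [hf]
    simp only
    rw [show (inner ℝ ((↑g : EuclideanSpace ℝ (Fin d)) + k) w : ℝ)
        = (inner ℝ (↑g : EuclideanSpace ℝ (Fin d)) w : ℝ) + (inner ℝ k w : ℝ) from
      inner_add_left _ _ _, hn]
    push_cast
    rw [mul_add, Complex.exp_add]
    have h1 : Complex.exp (-Complex.I * (2 * (Real.pi : ℂ) * (n : ℂ))) = 1 := by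
      rw [show (-Complex.I * (2 * (Real.pi : ℂ) * (n : ℂ)))
          = ((-n : ℤ) : ℂ) * (2 * (Real.pi : ℂ) * Complex.I) by push_cast; ring]
      exact Complex.exp_int_mul_two_pi_mul_I (-n)
    rw [h1, one_mul]
  have hww : (inner ℝ w w : ℝ) ≠ 0 := fun h => hw0 (inner_self_eq_zero.mp h)
  set t : EuclideanSpace ℝ (Fin d) := (Real.pi / (inner ℝ w w : ℝ)) • w with ht
  have htw : (inner ℝ t w : ℝ) = Real.pi := by
    rw [ht, real_inner_smul_left]
    exact div_mul_cancel₀ _ hww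
  have FD2 : IsAddFundamentalDomain Λs (t +ᵥ Γs) volume := FDs.vadd_of_comm t
  have h1 : ∫ k in Γs, f k = ∫ k in t +ᵥ Γs, f k := FDs.setIntegral_eq FD2 hper
  have h2 : ∫ k in t +ᵥ Γs, f k = ∫ k in Γs, f (t + k) := by
    rw [show (t +ᵥ Γs) = (fun k => t +ᵥ k) '' Γs from (Set.image_vadd).symm]
    exact (measurePreserving_vadd t volume).setIntegral_image_emb
      (measurableEmbedding_const_vadd t) f Γs
  have h3 : ∀ k, f (t + k) = - f k := by
    intro k
    rw [hf]
    simp only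
    rw [show (inner ℝ (t + k) w : ℝ) = (inner ℝ t w : ℝ) + (inner ℝ k w : ℝ) from
      inner_add_left _ _ _, htw]
    push_cast
    rw [mul_add, Complex.exp_add]
    have h5 : Complex.exp (-Complex.I * (Real.pi : ℂ)) = -1 := by
      rw [show (-Complex.I * (Real.pi : ℂ)) = -((Real.pi : ℂ) * Complex.I) by ring,
        Complex.exp_neg, Complex.exp_pi_mul_I]
      norm_num
    rw [h5]
    ring
  have h4 : ∫ k in Γs, f (t + k) = - ∫ k in Γs, f k := by
    rw [show (fun k => f (t + k)) = fun k => - f k from funext h3]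
    exact integral_neg f
  have h5 : ∫ k in Γs, f k = - ∫ k in Γs, f k := h1.trans (h2.trans h4)
  have h6 : (2:ℂ) * ∫ k in Γs, f k = 0 := by linear_combination h5
  exact (mul_eq_zero.mp h6).resolve_left two_ne_zero

end BlochAux

namespace BlochAux
open Complex Submodule Pointwise

variable {d : ℕ}

lemma parseval_pointwise
    (Lset : Set (EuclideanSpace ℝ (Fin d))) [Countable Lset]
    (Λ : AddSubgroup (EuclideanSpace ℝ (Fin d)))
    (hΛ : (↑Λ : Set (EuclideanSpace ℝ (Fin d))) = Lset)
    (Λs : AddSubgroup (EuclideanSpace ℝ (Fin d))) [Countable Λs]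
    (hcoe : (↑Λs : Set (EuclideanSpace ℝ (Fin d))) = dualLattice Lset)
    (Γs : Set (EuclideanSpace ℝ (Fin d)))
    (FDs : IsAddFundamentalDomain Λs Γs volume)
    (hVtop : volume Γs ≠ ⊤)
    (u : SchwartzMap (EuclideanSpace ℝ (Fin d)) ℂ) (x : EuclideanSpace ℝ (Fin d))
    (hsum : Summable fun ℓ : Lset => ‖u (x + (ℓ : EuclideanSpace ℝ (Fin d)))‖) :
    ∫ k in Γs, ‖∑' ℓ : Lset, u (x + (ℓ : EuclideanSpace ℝ (Fin d))) *
        Complex.exp (-Complex.I *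
          ((inner ℝ k (x + (ℓ : EuclideanSpace ℝ (Fin d))) : ℝ) : ℂ))‖ ^ 2
      = (volume Γs).toReal *
          ∑' ℓ : Lset, ‖u (x + (ℓ : EuclideanSpace ℝ (Fin d)))‖ ^ 2 := by
  classical
  haveI hfin : IsFiniteMeasure (volume.restrict Γs) :=
    ⟨by rwa [Measure.restrict_apply_univ, lt_top_iff_ne_top]⟩
  set c : Lset → ℂ := fun ℓ => u (x + (ℓ : EuclideanSpace ℝ (Fin d))) with hc
  set eE : Lset → EuclideanSpace ℝ (Fin d) → ℂ := fun ℓ k =>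
    Complex.exp (-Complex.I *
      ((inner ℝ k (x + (ℓ : EuclideanSpace ℝ (Fin d))) : ℝ) : ℂ)) with heE
  set F : EuclideanSpace ℝ (Fin d) → ℂ := fun k => ∑' ℓ : Lset, c ℓ * eE ℓ k with hF
  -- basic norm facts
  have hexp1 : ∀ (r : ℝ), ‖Complex.exp (-Complex.I * (r : ℂ))‖ = 1 := by
    intro r
    rw [Complex.norm_exp]
    simp
  have hnorm_term : ∀ (ℓ : Lset) (k : EuclideanSpace ℝ (Fin d)),
      ‖c ℓ * eE ℓ k‖ = ‖c ℓ‖ := by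
    intro ℓ k
    rw [norm_mul, heE]
    simp only
    rw [hexp1, mul_one]
  have hsum_term : ∀ k : EuclideanSpace ℝ (Fin d),
      Summable fun ℓ : Lset => ‖c ℓ * eE ℓ k‖ := by
    intro k
    exact hsum.congr fun ℓ => (hnorm_term ℓ k).symm
  have hsummable : ∀ k : EuclideanSpace ℝ (Fin d),
      Summable fun ℓ : Lset => c ℓ * eE ℓ k := fun k => (hsum_term k).of_norm
  set S : ℝ := ∑' ℓ : Lset, ‖c ℓ‖ with hS
  have hFle : ∀ k, ‖F k‖ ≤ S := by
    intro k
    rw [hF]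
    simp only
    calc ‖∑' ℓ : Lset, c ℓ * eE ℓ k‖ ≤ ∑' ℓ : Lset, ‖c ℓ * eE ℓ k‖ :=
          norm_tsum_le_tsum_norm (hsum_term k)
      _ = S := tsum_congr fun ℓ => hnorm_term ℓ k
  have hcont_term : ∀ ℓ : Lset, Continuous (fun k => c ℓ * eE ℓ k) := by
    intro ℓ
    refine continuous_const.mul ?_
    refine Complex.continuous_exp.comp ?_
    refine Continuous.mul continuous_const ?_
    exact Complex.continuous_ofReal.comp
      ((continuous_id.inner continuous_const))
  have hFcont : Continuous F := by
    refine continuous_tsum hcont_term hsum fun ℓ k => ?_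
    rw [hnorm_term]
  -- conjugate expansion
  have hconj : ∀ k, (starRingEnd ℂ) (F k)
      = ∑' ℓ : Lset, (starRingEnd ℂ) (c ℓ * eE ℓ k) := by
    intro k
    exact tsum_star
  have hmul : ∀ k, F k * (starRingEnd ℂ) (F k)
      = ∑' p : Lset × Lset, (c p.1 * eE p.1 k) * (starRingEnd ℂ) (c p.2 * eE p.2 k) := by
    intro k
    rw [hF]
    simp only
    rw [hconj k]
    refine tsum_mul_tsum_of_summable_norm (hsum_term k) ?_
    refine (hsum_term k).congr fun ℓ => ?_
    rw [RCLike.norm_conj]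
  -- the (ℓ, m) term as a pure exponential
  have hterm : ∀ (p : Lset × Lset) (k : EuclideanSpace ℝ (Fin d)),
      (c p.1 * eE p.1 k) * (starRingEnd ℂ) (c p.2 * eE p.2 k)
        = (c p.1 * (starRingEnd ℂ) (c p.2)) *
          Complex.exp (-Complex.I *
            ((inner ℝ k ((p.1 : EuclideanSpace ℝ (Fin d)) - (p.2 : EuclideanSpace ℝ (Fin d))) : ℝ) : ℂ)) := by
    intro p k
    rw [map_mul]
    have hconjE : (starRingEnd ℂ) (eE p.2 k)
        = Complex.exp (Complex.I * ((inner ℝ k (x + (p.2 : EuclideanSpace ℝ (Fin d))) : ℝ) : ℂ)) := by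
      rw [heE]
      simp only
      rw [← Complex.exp_conj]
      congr 1
      simp
    have hinner : (inner ℝ k (x + (p.1 : EuclideanSpace ℝ (Fin d))) : ℝ)
        - (inner ℝ k (x + (p.2 : EuclideanSpace ℝ (Fin d))) : ℝ)
        = (inner ℝ k ((p.1 : EuclideanSpace ℝ (Fin d)) - (p.2 : EuclideanSpace ℝ (Fin d))) : ℝ) := by
      rw [← inner_sub_right]
      congr 1
      abel
    have hexpmul : eE p.1 k * (starRingEnd ℂ) (eE p.2 k)
        = Complex.exp (-Complex.I *
            ((inner ℝ k ((p.1 : EuclideanSpace ℝ (Fin d)) - (p.2 : EuclideanSpace ℝ (Fin d))) : ℝ) : ℂ)) := by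
      rw [hconjE, heE]
      simp only
      rw [← Complex.exp_add, ← hinner]
      congr 1
      push_cast
      ring
    calc (c p.1 * eE p.1 k) * ((starRingEnd ℂ) (c p.2) * (starRingEnd ℂ) (eE p.2 k))
        = (c p.1 * (starRingEnd ℂ) (c p.2)) * (eE p.1 k * (starRingEnd ℂ) (eE p.2 k)) := by
          ring
      _ = _ := by rw [hexpmul]
  -- integrability of |F|^2
  have hFmeas : AEStronglyMeasurable (fun k => F k * (starRingEnd ℂ) (F k))
      (volume.restrict Γs) :=
    (hFcont.mul (Complex.continuous_conj.comp hFcont)).aestronglyMeasurable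
  have hS0 : 0 ≤ S := tsum_nonneg fun ℓ => norm_nonneg _
  have hInt : Integrable (fun k => F k * (starRingEnd ℂ) (F k)) (volume.restrict Γs) := by
    refine Integrable.mono' (integrable_const (S * S)) hFmeas ?_
    refine Filter.Eventually.of_forall fun k => ?_
    rw [norm_mul, RCLike.norm_conj]
    exact mul_le_mul (hFle k) (hFle k) (norm_nonneg _) hS0
  -- nnnorm facts for the double sum
  have hgnorm : ∀ (p : Lset × Lset) (k : EuclideanSpace ℝ (Fin d)),
      ‖(c p.1 * (starRingEnd ℂ) (c p.2)) *
          Complex.exp (-Complex.I *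
            ((inner ℝ k ((p.1 : EuclideanSpace ℝ (Fin d)) - (p.2 : EuclideanSpace ℝ (Fin d))) : ℝ) : ℂ))‖
        = ‖c p.1‖ * ‖c p.2‖ := by
    intro p k
    rw [norm_mul, norm_mul, RCLike.norm_conj, hexp1, mul_one]
  -- swap integral and sum
  have hint_eq : ∫ k in Γs, F k * (starRingEnd ℂ) (F k)
      = ∑' p : Lset × Lset, ∫ k in Γs, (c p.1 * (starRingEnd ℂ) (c p.2)) *
          Complex.exp (-Complex.I *
            ((inner ℝ k ((p.1 : EuclideanSpace ℝ (Fin d)) - (p.2 : EuclideanSpace ℝ (Fin d))) : ℝ) : ℂ)) := by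
    rw [show (fun k => F k * (starRingEnd ℂ) (F k))
        = fun k => ∑' p : Lset × Lset, (c p.1 * (starRingEnd ℂ) (c p.2)) *
            Complex.exp (-Complex.I *
              ((inner ℝ k ((p.1 : EuclideanSpace ℝ (Fin d)) - (p.2 : EuclideanSpace ℝ (Fin d))) : ℝ) : ℂ)) from
      funext fun k => (hmul k).trans (tsum_congr fun p => hterm p k)]
    refine integral_tsum (fun p => ?_) ?_
    · refine Continuous.aestronglyMeasurable ?_
      refine continuous_const.mul ?_
      refine Complex.continuous_exp.comp ?_
      refine Continuous.mul continuous_const ?_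
      exact Complex.continuous_ofReal.comp ((continuous_id.inner continuous_const))
    · -- finiteness of the double sum of lintegrals
      have hlint : ∀ p : Lset × Lset, ∫⁻ k in Γs,
          ‖(c p.1 * (starRingEnd ℂ) (c p.2)) *
            Complex.exp (-Complex.I *
              ((inner ℝ k ((p.1 : EuclideanSpace ℝ (Fin d)) - (p.2 : EuclideanSpace ℝ (Fin d))) : ℝ) : ℂ))‖₊ ∂volume
          = (‖c p.1‖₊ : ENNReal) * (‖c p.2‖₊ : ENNReal) * volume Γs := by
        intro p
        have : ∀ k : EuclideanSpace ℝ (Fin d), (‖(c p.1 * (starRingEnd ℂ) (c p.2)) *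
            Complex.exp (-Complex.I *
              ((inner ℝ k ((p.1 : EuclideanSpace ℝ (Fin d)) - (p.2 : EuclideanSpace ℝ (Fin d))) : ℝ) : ℂ))‖₊ : ENNReal)
            = (‖c p.1‖₊ : ENNReal) * (‖c p.2‖₊ : ENNReal) := by
          intro k
          have h9 := hgnorm p k
          have h10 : ‖(c p.1 * (starRingEnd ℂ) (c p.2)) *
            Complex.exp (-Complex.I *
              ((inner ℝ k ((p.1 : EuclideanSpace ℝ (Fin d)) - (p.2 : EuclideanSpace ℝ (Fin d))) : ℝ) : ℂ))‖₊
              = ‖c p.1‖₊ * ‖c p.2‖₊ := by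
            ext
            push_cast
            exact h9
          rw [h10]
          push_cast
          ring
        rw [lintegral_congr this, lintegral_const, Measure.restrict_apply_univ]
      simp only [enorm_eq_nnnorm]
      rw [tsum_congr hlint]
      have hnnsum : Summable fun ℓ : Lset => ‖c ℓ‖₊ := by
        rw [← NNReal.summable_coe]
        exact hsum.congr fun ℓ => (coe_nnnorm _).symm
      have hne : (∑' ℓ : Lset, (‖c ℓ‖₊ : ENNReal)) ≠ ⊤ :=
        ENNReal.tsum_coe_ne_top_iff_summable.mpr hnnsum
      calc ∑' p : Lset × Lset, (‖c p.1‖₊ : ENNReal) * (‖c p.2‖₊ : ENNReal) * volume Γs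
          = (∑' p : Lset × Lset, (‖c p.1‖₊ : ENNReal) * (‖c p.2‖₊ : ENNReal)) * volume Γs :=
            ENNReal.tsum_mul_right
        _ = ((∑' ℓ : Lset, (‖c ℓ‖₊ : ENNReal)) * (∑' ℓ : Lset, (‖c ℓ‖₊ : ENNReal))) * volume Γs := by
            rw [ENNReal.tsum_prod']
            congr 1
            calc ∑' (a : Lset), ∑' (b : Lset), (‖c (a, b).1‖₊ : ENNReal) * (‖c (a, b).2‖₊ : ENNReal)
                = ∑' (a : Lset), (‖c a‖₊ : ENNReal) * ∑' (b : Lset), (‖c b‖₊ : ENNReal) := by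
                  refine tsum_congr fun a => ?_
                  have hb : (fun b : Lset => (‖c (a, b).1‖₊ : ENNReal) * (‖c (a, b).2‖₊ : ENNReal))
                      = fun b : Lset => (‖c a‖₊ : ENNReal) * (‖c b‖₊ : ENNReal) := rfl
                  rw [hb, ENNReal.tsum_mul_left]
              _ = _ := ENNReal.tsum_mul_right
        _ ≠ ⊤ := by
            exact ENNReal.mul_ne_top (ENNReal.mul_ne_top hne hne) hVtop
  -- evaluate each integral
  have hperint : ∀ p : Lset × Lset,
      ∫ k in Γs, (c p.1 * (starRingEnd ℂ) (c p.2)) *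
          Complex.exp (-Complex.I *
            ((inner ℝ k ((p.1 : EuclideanSpace ℝ (Fin d)) - (p.2 : EuclideanSpace ℝ (Fin d))) : ℝ) : ℂ))
        = if p.1 = p.2 then (c p.1 * (starRingEnd ℂ) (c p.2)) * (((volume Γs).toReal : ℝ) : ℂ)
          else 0 := by
    intro p
    rw [MeasureTheory.integral_const_mul]
    by_cases hpq : p.1 = p.2
    · rw [if_pos hpq]
      congr 1
      have hzero : ((p.1 : EuclideanSpace ℝ (Fin d)) - (p.2 : EuclideanSpace ℝ (Fin d))) = 0 := by
        rw [hpq, sub_self]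
      simp only [hzero, inner_zero_right, Complex.ofReal_zero, mul_zero, Complex.exp_zero]
      rw [integral_const, Measure.real, Measure.restrict_apply_univ]
      simp [Complex.real_smul]
    · rw [if_neg hpq]
      have hiff := Set.ext_iff.mp hΛ
      have hmem1 : ((p.1 : EuclideanSpace ℝ (Fin d)) : EuclideanSpace ℝ (Fin d)) ∈ Λ :=
        (hiff _).mpr p.1.2
      have hmem2 : ((p.2 : EuclideanSpace ℝ (Fin d)) : EuclideanSpace ℝ (Fin d)) ∈ Λ :=
        (hiff _).mpr p.2.2
      have hwL : ((p.1 : EuclideanSpace ℝ (Fin d)) - (p.2 : EuclideanSpace ℝ (Fin d))) ∈ Lset :=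
        (hiff _).mp (SetLike.mem_coe.mpr (sub_mem hmem1 hmem2))
      have hw0 : ((p.1 : EuclideanSpace ℝ (Fin d)) - (p.2 : EuclideanSpace ℝ (Fin d))) ≠ 0 := by
        intro h
        exact hpq (Subtype.ext (sub_eq_zero.mp h))
      rw [setIntegral_exp_eq_zero Lset Λs hcoe Γs FDs _ hwL hw0, mul_zero]
  -- sum over the diagonal
  have hdiag : ∑' p : Lset × Lset,
      (if p.1 = p.2 then (c p.1 * (starRingEnd ℂ) (c p.2)) * (((volume Γs).toReal : ℝ) : ℂ) else 0)
      = (((∑' ℓ : Lset, ‖c ℓ‖ ^ 2 : ℝ)) : ℂ) * (((volume Γs).toReal : ℝ) : ℂ) := by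
    have hinj : Function.Injective (fun ℓ : Lset => ((ℓ, ℓ) : Lset × Lset)) := by
      intro a b h
      exact congrArg Prod.fst h
    have hsupp : Function.support (fun p : Lset × Lset =>
        (if p.1 = p.2 then (c p.1 * (starRingEnd ℂ) (c p.2)) * (((volume Γs).toReal : ℝ) : ℂ) else 0))
        ⊆ Set.range (fun ℓ : Lset => ((ℓ, ℓ) : Lset × Lset)) := by
      intro p hp
      by_cases hpq : p.1 = p.2
      · exact ⟨p.1, by rw [Prod.ext_iff]; exact ⟨rfl, hpq⟩⟩
      · exfalso
        apply hp
        show (if p.1 = p.2 then (c p.1 * (starRingEnd ℂ) (c p.2)) *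
          (((volume Γs).toReal : ℝ) : ℂ) else 0) = 0
        rw [if_neg hpq]
    rw [← Function.Injective.tsum_eq hinj hsupp]
    have hterm2 : ∀ ℓ : Lset,
        (if ((ℓ, ℓ) : Lset × Lset).1 = ((ℓ, ℓ) : Lset × Lset).2 then
          (c ((ℓ, ℓ) : Lset × Lset).1 * (starRingEnd ℂ) (c ((ℓ, ℓ) : Lset × Lset).2)) *
            (((volume Γs).toReal : ℝ) : ℂ) else 0)
        = ((‖c ℓ‖ ^ 2 : ℝ) : ℂ) * (((volume Γs).toReal : ℝ) : ℂ) := by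
      intro ℓ
      rw [if_pos rfl]
      congr 1
      rw [Complex.mul_conj, Complex.normSq_eq_norm_sq]
    rw [tsum_congr hterm2, tsum_mul_right, Complex.ofReal_tsum]
  -- assembling
  have hre : ∀ z : ℂ, ‖z‖ ^ 2 = (z * (starRingEnd ℂ) z).re := by
    intro z
    rw [Complex.mul_conj, Complex.ofReal_re, Complex.normSq_eq_norm_sq]
  have step1 : ∫ k in Γs, ‖F k‖ ^ 2 = (∫ k in Γs, F k * (starRingEnd ℂ) (F k)).re := by
    have h := integral_re hInt
    rw [show (∫ k in Γs, F k * (starRingEnd ℂ) (F k)).re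
        = RCLike.re (∫ k in Γs, F k * (starRingEnd ℂ) (F k)) from rfl, ← h]
    refine integral_congr_ae (Filter.Eventually.of_forall fun k => ?_)
    show ‖F k‖ ^ 2 = RCLike.re (F k * (starRingEnd ℂ) (F k))
    rw [hre (F k)]
    rfl
  have step2 : ∫ k in Γs, F k * (starRingEnd ℂ) (F k)
      = ((∑' ℓ : Lset, ‖c ℓ‖ ^ 2 : ℝ) : ℂ) * (((volume Γs).toReal : ℝ) : ℂ) :=
    hint_eq.trans ((tsum_congr hperint).trans hdiag)
  rw [step1, step2, ← Complex.ofReal_mul, Complex.ofReal_re, mul_comm]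

end BlochAux

namespace BlochAux
open Complex Submodule Pointwise

variable {d : ℕ}

lemma norm_exp_neg_I_mul (r : ℝ) : ‖Complex.exp (-Complex.I * (r : ℂ))‖ = 1 := by
  rw [Complex.norm_exp]
  simp

end BlochAux

set_option maxHeartbeats 2000000 in
open BlochAux Complex Submodule Pointwise in
/-- Plancherel (isometry) property of the Bloch transform
`(𝓑u)(k)(x) = Σ_{ℓ ∈ L} u(x + ℓ) e^{−i k·(x+ℓ)}` for Schwartz functions. -/
theorem bloch_transform_plancherel
    {d : ℕ}
    (L : Set (EuclideanSpace ℝ (Fin d))) (hL : IsFullRankLattice L)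
    (Γ : Set (EuclideanSpace ℝ (Fin d))) (hΓ : IsFundDomain L Γ)
    (Γstar : Set (EuclideanSpace ℝ (Fin d))) (hΓstar : IsFundDomain (dualLattice L) Γstar)
    (u : SchwartzMap (EuclideanSpace ℝ (Fin d)) ℂ) :
    ∫ x : EuclideanSpace ℝ (Fin d), ‖u x‖ ^ 2
      = (1 / (volume Γstar).toReal) *
        ∫ k in Γstar, ∫ x in Γ,
          ‖∑' ℓ : L, u (x + (ℓ : EuclideanSpace ℝ (Fin d))) *
            Complex.exp (-(Complex.I) *
              ((inner ℝ k (x + (ℓ : EuclideanSpace ℝ (Fin d))) : ℝ) : ℂ))‖ ^ 2 := by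
  classical
  obtain ⟨a, hLa⟩ := hL
  have hLa' : L = latSet a := hLa
  subst hLa'
  -- subgroup structure
  set Λ : AddSubgroup (EuclideanSpace ℝ (Fin d)) := latGroup a with hΛdef
  have hΛ : (↑Λ : Set (EuclideanSpace ℝ (Fin d))) = latSet a := coe_latGroup a
  have hiff := Set.ext_iff.mp hΛ
  obtain ⟨b, hb⟩ := exists_dual_basis a
  have hdual : dualLattice (latSet a) = latSet b := dualLattice_latSet_eq a b hb
  set Λs : AddSubgroup (EuclideanSpace ℝ (Fin d)) := latGroup b with hΛsdef
  have hΛscoe : (↑Λs : Set (EuclideanSpace ℝ (Fin d))) = dualLattice (latSet a) := by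
    rw [coe_latGroup b, hdual]
  -- countability
  haveI hcL : Countable (latSet a) := countable_latSet a
  haveI hcΛ : Countable Λ := by
    refine Countable.of_equiv (latSet a) (Equiv.symm ?_)
    exact Equiv.subtypeEquivRight fun z => (SetLike.mem_coe).symm.trans (hiff z)
  haveI hcLb : Countable (latSet b) := countable_latSet b
  haveI hcΛs : Countable Λs := by
    refine Countable.of_equiv (latSet b) (Equiv.symm ?_)
    exact Equiv.subtypeEquivRight fun z =>
      (SetLike.mem_coe).symm.trans (Set.ext_iff.mp (by rw [coe_latGroup b]) z)
  -- fundamental domains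
  have FD : IsAddFundamentalDomain Λ Γ volume := by
    refine isAddFundamentalDomain_of Λ Γ ?_
    rw [hΛ]; exact hΓ
  have FDs : IsAddFundamentalDomain Λs Γstar volume := by
    refine isAddFundamentalDomain_of Λs Γstar ?_
    rw [hΛscoe]; exact hΓstar
  have FDZa : IsAddFundamentalDomain Λ (ZSpan.fundamentalDomain a) volume :=
    ZSpan.isAddFundamentalDomain' a volume
  have FDZb : IsAddFundamentalDomain Λs (ZSpan.fundamentalDomain b) volume :=
    ZSpan.isAddFundamentalDomain' b volume
  -- measure facts
  have hVs0 : volume Γstar ≠ 0 := by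
    rw [FDs.measure_eq FDZb]
    exact ZSpan.measure_fundamentalDomain_ne_zero b
  have hVstop : volume Γstar ≠ ⊤ := by
    rw [FDs.measure_eq FDZb]
    exact ((ZSpan.fundamentalDomain_isBounded b).measure_lt_top).ne
  have hVΓtop : volume Γ ≠ ⊤ := by
    rw [FD.measure_eq FDZa]
    exact ((ZSpan.fundamentalDomain_isBounded a).measure_lt_top).ne
  haveI hfinΓs : IsFiniteMeasure (volume.restrict Γstar) :=
    ⟨by rwa [Measure.restrict_apply_univ, lt_top_iff_ne_top]⟩
  haveI hfinΓ : IsFiniteMeasure (volume.restrict Γ) :=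
    ⟨by rwa [Measure.restrict_apply_univ, lt_top_iff_ne_top]⟩
  -- decay package
  obtain ⟨W, hW0, hWs, C, hC0, hCW⟩ := exists_decay a u
  set v : (Fin d → ℤ) → EuclideanSpace ℝ (Fin d) := fun n => ∑ i, (n i : ℝ) • a i with hv
  set Wtot : ℝ := ∑' n, W n with hWtot
  have hWtot0 : 0 ≤ Wtot := tsum_nonneg hW0
  obtain ⟨B, hB0, hB⟩ : ∃ B : ℝ, 0 ≤ B ∧ ∀ y, ‖u y‖ ≤ B := by
    refine ⟨2 ^ 0 *
      ((Finset.Iic ((0:ℕ), (0:ℕ))).sup fun m => SchwartzMap.seminorm ℝ m.1 m.2) u, by positivity,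
      fun y => ?_⟩
    have h := SchwartzMap.one_add_le_sup_seminorm_apply (𝕜 := ℝ) (m := (0, 0))
      le_rfl le_rfl u y
    rw [norm_iteratedFDeriv_zero] at h
    simpa using h
  -- summability at every point
  have hsummx : ∀ x, Summable fun ℓ : latSet a => ‖u (x + (ℓ : EuclideanSpace ℝ (Fin d)))‖ := by
    intro x
    refine ((latEquiv a).summable_iff).mp ?_
    refine Summable.of_nonneg_of_le (fun n => norm_nonneg _) (fun n => ?_) (hWs.mul_left (C * (1 + ‖x‖) ^ (d+1)))
    show ‖u (x + ((latEquiv a n : latSet a) : EuclideanSpace ℝ (Fin d)))‖ ≤ _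
    rw [latEquiv_apply]
    calc ‖u (x + ∑ i, (n i : ℝ) • a i)‖ ≤ C * (1 + ‖x‖) ^ (d+1) * W n := hCW x n
      _ = C * (1 + ‖x‖) ^ (d+1) * W n := rfl
  have hsummx2 : ∀ x, Summable fun ℓ : latSet a =>
      ‖u (x + (ℓ : EuclideanSpace ℝ (Fin d)))‖ ^ 2 := by
    intro x
    refine Summable.of_nonneg_of_le (fun ℓ => sq_nonneg _) (fun ℓ => ?_) ((hsummx x).mul_left B)
    rw [sq]
    exact mul_le_mul_of_nonneg_right (hB _) (norm_nonneg _)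
  -- continuity of the periodization of ‖u‖
  have hucont : ∀ n : Fin d → ℤ, Continuous fun x : EuclideanSpace ℝ (Fin d) => ‖u (x + v n)‖ :=
    fun n => (u.continuous.comp (continuous_id.add continuous_const)).norm
  set Ssum : EuclideanSpace ℝ (Fin d) → ℝ := fun x => ∑' n : Fin d → ℤ, ‖u (x + v n)‖ with hSsum
  have hScont : Continuous Ssum := by
    rw [continuous_iff_continuousAt]
    intro x0
    refine ContinuousOn.continuousAt ?_ ((Metric.isOpen_ball (x := (0 : EuclideanSpace ℝ (Fin d)))
      (ε := ‖x0‖ + 1)).mem_nhds ?_)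
    · refine continuousOn_tsum (fun n => (hucont n).continuousOn)
        (hWs.mul_left (C * (1 + (‖x0‖ + 1)) ^ (d+1))) fun n x hx => ?_
      have hxlt : ‖x‖ < ‖x0‖ + 1 := by
        simpa [Metric.mem_ball, dist_zero_right] using hx
      rw [norm_norm]
      calc ‖u (x + v n)‖ ≤ C * (1 + ‖x‖) ^ (d+1) * W n := hCW x n
        _ ≤ C * (1 + (‖x0‖ + 1)) ^ (d+1) * W n := by
            have hple : (1 + ‖x‖) ^ (d+1) ≤ (1 + (‖x0‖ + 1)) ^ (d+1) := by
              refine pow_le_pow_left₀ (by positivity) (by linarith) _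
            have := mul_le_mul_of_nonneg_right
              (mul_le_mul_of_nonneg_left hple hC0) (hW0 n)
            linarith
    · simpa [Metric.mem_ball, dist_zero_right] using
        (by linarith : ‖x0‖ < ‖x0‖ + 1)
  have hSle : ∀ x, Ssum x ≤ C * (1 + ‖x‖) ^ (d+1) * Wtot := by
    intro x
    rw [hSsum]
    have := Summable.tsum_le_tsum (f := fun n => ‖u (x + v n)‖)
      (g := fun n => C * (1 + ‖x‖) ^ (d+1) * W n) (fun n => hCW x n)
      (((latEquiv a).summable_iff).mpr (hsummx x)) (hWs.mul_left _)
    rw [tsum_mul_left] at this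
    simpa [hWtot] using this
  have hS0 : ∀ x, 0 ≤ Ssum x := fun x => tsum_nonneg fun n => norm_nonneg _
  -- tsum over the lattice equals tsum over coordinates
  have htsum_eq : ∀ (f : EuclideanSpace ℝ (Fin d) → ℝ),
      (∑' ℓ : latSet a, f (ℓ : EuclideanSpace ℝ (Fin d))) = ∑' n : Fin d → ℤ, f (v n) :=
    fun f => ((latEquiv a).tsum_eq fun ℓ => f (ℓ : EuclideanSpace ℝ (Fin d))).symm
  have hsumn : ∀ x, Summable fun n : Fin d → ℤ => ‖u (x + v n)‖ :=
    fun x => ((latEquiv a).summable_iff).mpr (hsummx x)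
  -- the Bloch transform as a jointly continuous function on pairs
  set 𝓕 : (EuclideanSpace ℝ (Fin d)) × (EuclideanSpace ℝ (Fin d)) → ℂ := fun p =>
    ∑' n : Fin d → ℤ, u (p.2 + v n) *
      Complex.exp (-Complex.I * ((inner ℝ p.1 (p.2 + v n) : ℝ) : ℂ)) with h𝓕
  have hterm_norm : ∀ (n : Fin d → ℤ)
      (p : (EuclideanSpace ℝ (Fin d)) × (EuclideanSpace ℝ (Fin d))),
      ‖u (p.2 + v n) * Complex.exp (-Complex.I * ((inner ℝ p.1 (p.2 + v n) : ℝ) : ℂ))‖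
        = ‖u (p.2 + v n)‖ := by
    intro n p
    rw [norm_mul, norm_exp_neg_I_mul, mul_one]
  have h𝓕eq : ∀ k x, (∑' ℓ : latSet a, u (x + (ℓ : EuclideanSpace ℝ (Fin d))) *
      Complex.exp (-Complex.I *
        ((inner ℝ k (x + (ℓ : EuclideanSpace ℝ (Fin d))) : ℝ) : ℂ)))
      = 𝓕 (k, x) := by
    intro k x
    have hb : ∀ n : Fin d → ℤ,
        u (x + ((latEquiv a n : latSet a) : EuclideanSpace ℝ (Fin d))) *
          Complex.exp (-Complex.I *
            ((inner ℝ k (x + ((latEquiv a n : latSet a) : EuclideanSpace ℝ (Fin d))) : ℝ) : ℂ))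
        = u (x + v n) * Complex.exp (-Complex.I * ((inner ℝ k (x + v n) : ℝ) : ℂ)) := by
      intro n
      rw [show ((latEquiv a n : latSet a) : EuclideanSpace ℝ (Fin d)) = v n from by
        rw [hv]; exact latEquiv_apply a n]
    calc (∑' ℓ : latSet a, u (x + (ℓ : EuclideanSpace ℝ (Fin d))) *
          Complex.exp (-Complex.I *
            ((inner ℝ k (x + (ℓ : EuclideanSpace ℝ (Fin d))) : ℝ) : ℂ)))
        = ∑' n : Fin d → ℤ,
            u (x + ((latEquiv a n : latSet a) : EuclideanSpace ℝ (Fin d))) *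
              Complex.exp (-Complex.I *
                ((inner ℝ k (x + ((latEquiv a n : latSet a) : EuclideanSpace ℝ (Fin d))) : ℝ) : ℂ)) :=
          ((latEquiv a).tsum_eq fun ℓ : latSet a =>
            u (x + (ℓ : EuclideanSpace ℝ (Fin d))) * Complex.exp (-Complex.I *
              ((inner ℝ k (x + (ℓ : EuclideanSpace ℝ (Fin d))) : ℝ) : ℂ))).symm
      _ = ∑' n : Fin d → ℤ, u (x + v n) *
            Complex.exp (-Complex.I * ((inner ℝ k (x + v n) : ℝ) : ℂ)) := tsum_congr hb
      _ = 𝓕 (k, x) := rfl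
  have h𝓕cont : Continuous 𝓕 := by
    rw [continuous_iff_continuousAt]
    rintro ⟨k0, x0⟩
    have hopen : IsOpen {p : (EuclideanSpace ℝ (Fin d)) × (EuclideanSpace ℝ (Fin d)) |
        p.2 ∈ Metric.ball (0 : EuclideanSpace ℝ (Fin d)) (‖x0‖ + 1)} :=
      Metric.isOpen_ball.preimage continuous_snd
    refine ContinuousOn.continuousAt ?_ (hopen.mem_nhds ?_)
    · refine continuousOn_tsum (fun n => Continuous.continuousOn ?_)
        (hWs.mul_left (C * (1 + (‖x0‖ + 1)) ^ (d+1))) fun n p hp => ?_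
      · refine ((u.continuous.comp (continuous_snd.add continuous_const)).mul ?_)
        refine Complex.continuous_exp.comp ?_
        refine Continuous.mul continuous_const ?_
        exact Complex.continuous_ofReal.comp
          (Continuous.inner continuous_fst (continuous_snd.add continuous_const))
      · have hxlt : ‖p.2‖ < ‖x0‖ + 1 := by
          simpa [Metric.mem_ball, dist_zero_right] using hp
        rw [hterm_norm]
        calc ‖u (p.2 + v n)‖ ≤ C * (1 + ‖p.2‖) ^ (d+1) * W n := hCW p.2 n
          _ ≤ C * (1 + (‖x0‖ + 1)) ^ (d+1) * W n := by
              have hple : (1 + ‖p.2‖) ^ (d+1) ≤ (1 + (‖x0‖ + 1)) ^ (d+1) :=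
                pow_le_pow_left₀ (by positivity) (by linarith) _
              have := mul_le_mul_of_nonneg_right
                (mul_le_mul_of_nonneg_left hple hC0) (hW0 n)
              linarith
    · show (k0, x0).2 ∈ Metric.ball (0 : EuclideanSpace ℝ (Fin d)) (‖x0‖ + 1)
      simpa [Metric.mem_ball, dist_zero_right] using (by linarith : ‖x0‖ < ‖x0‖ + 1)
  have h𝓕le : ∀ p : (EuclideanSpace ℝ (Fin d)) × (EuclideanSpace ℝ (Fin d)),
      ‖𝓕 p‖ ≤ Ssum p.2 := by
    intro p
    calc ‖𝓕 p‖ ≤ ∑' n : Fin d → ℤ, ‖u (p.2 + v n) *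
          Complex.exp (-Complex.I * ((inner ℝ p.1 (p.2 + v n) : ℝ) : ℂ))‖ := by
          refine norm_tsum_le_tsum_norm ?_
          exact (hsumn p.2).congr fun n => (hterm_norm n p).symm
      _ = Ssum p.2 := tsum_congr fun n => hterm_norm n p
  -- integrability of the periodization on Γ
  set Sq : EuclideanSpace ℝ (Fin d) → ℝ := fun x => (Ssum x) ^ 2 with hSq
  have hSqcont : Continuous Sq := hScont.pow 2
  let eΛ : Λ ≃ latSet a :=
    Equiv.subtypeEquivRight fun z => (SetLike.mem_coe).symm.trans (hiff z)
  have hSsum_lat : ∀ x, Ssum x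
      = ∑' ℓ : latSet a, ‖u (x + (ℓ : EuclideanSpace ℝ (Fin d)))‖ :=
    fun x => (htsum_eq (fun y => ‖u (x + y)‖)).symm
  have hper : ∀ (g : Λ) (x : EuclideanSpace ℝ (Fin d)), Sq (g +ᵥ x) = Sq x := by
    intro g x
    let e_g : (latSet a) ≃ (latSet a) :=
      { toFun := fun ℓ => ⟨(ℓ : EuclideanSpace ℝ (Fin d)) + g,
          (hiff _).mp (SetLike.mem_coe.mpr (add_mem ((hiff _).mpr ℓ.2) g.2))⟩
        invFun := fun ℓ => ⟨(ℓ : EuclideanSpace ℝ (Fin d)) - g,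
          (hiff _).mp (SetLike.mem_coe.mpr (sub_mem ((hiff _).mpr ℓ.2) g.2))⟩
        left_inv := fun ℓ => Subtype.ext (by simp)
        right_inv := fun ℓ => Subtype.ext (by simp) }
    have hSper : Ssum ((g : EuclideanSpace ℝ (Fin d)) + x) = Ssum x := by
      rw [hSsum_lat, hSsum_lat]
      calc ∑' ℓ : latSet a, ‖u (((g : EuclideanSpace ℝ (Fin d)) + x) + ℓ)‖
          = ∑' ℓ : latSet a, ‖u (x + ((e_g ℓ : latSet a) : EuclideanSpace ℝ (Fin d)))‖ := by
            refine tsum_congr fun ℓ => ?_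
            have harg : ((g : EuclideanSpace ℝ (Fin d)) + x) + ℓ
                = x + ((ℓ : EuclideanSpace ℝ (Fin d)) + g) := by abel
            rw [harg]
            rfl
        _ = ∑' ℓ : latSet a, ‖u (x + (ℓ : EuclideanSpace ℝ (Fin d)))‖ :=
            e_g.tsum_eq fun ℓ : latSet a => ‖u (x + (ℓ : EuclideanSpace ℝ (Fin d)))‖
    show (Ssum ((g : EuclideanSpace ℝ (Fin d)) + x)) ^ 2 = (Ssum x) ^ 2
    rw [hSper]
  have hSqInt : IntegrableOn Sq Γ volume := by
    rw [FD.integrableOn_iff FDZa hper]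
    obtain ⟨R, hR⟩ := (ZSpan.fundamentalDomain_isBounded a).subset_closedBall
      (0 : EuclideanSpace ℝ (Fin d))
    haveI : IsFiniteMeasure (volume.restrict (ZSpan.fundamentalDomain a)) :=
      ⟨by rw [Measure.restrict_apply_univ]
          exact (ZSpan.fundamentalDomain_isBounded a).measure_lt_top⟩
    set R' : ℝ := max R 0 with hR'
    refine Integrable.mono' (integrable_const ((C * (1 + R') ^ (d+1) * Wtot) ^ 2))
      hSqcont.aestronglyMeasurable ?_
    filter_upwards [ae_restrict_mem (ZSpan.fundamentalDomain_measurableSet a)] with x hx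
    have hxR : ‖x‖ ≤ R' := by
      have := hR hx
      rw [Metric.mem_closedBall, dist_zero_right] at this
      exact this.trans (le_max_left _ _)
    have hstep : Ssum x ≤ C * (1 + R') ^ (d+1) * Wtot := by
      refine (hSle x).trans ?_
      have hple : (1 + ‖x‖) ^ (d+1) ≤ (1 + R') ^ (d+1) :=
        pow_le_pow_left₀ (by positivity) (by linarith) _
      have := mul_le_mul_of_nonneg_right (mul_le_mul_of_nonneg_left hple hC0) hWtot0
      linarith
    rw [Real.norm_of_nonneg (by positivity : (0:ℝ) ≤ Sq x)]
    show (Ssum x) ^ 2 ≤ (C * (1 + R') ^ (d+1) * Wtot) ^ 2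
    exact pow_le_pow_left₀ (hS0 x) hstep 2
  -- joint integrability and Fubini
  set G2 : (EuclideanSpace ℝ (Fin d)) × (EuclideanSpace ℝ (Fin d)) → ℝ :=
    fun p => ‖𝓕 p‖ ^ 2 with hG2
  have hG2meas : AEStronglyMeasurable G2
      ((volume.restrict Γstar).prod (volume.restrict Γ)) :=
    ((h𝓕cont.norm.pow 2)).aestronglyMeasurable
  have hG2le : ∀ p, G2 p ≤ Sq p.2 := by
    intro p
    show ‖𝓕 p‖ ^ 2 ≤ (Ssum p.2) ^ 2
    exact pow_le_pow_left₀ (norm_nonneg _) (h𝓕le p) 2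
  have hA0 : (0:ℝ) ≤ ∫ x in Γ, Sq x := integral_nonneg fun x => sq_nonneg _
  have hprodInt : Integrable G2 ((volume.restrict Γstar).prod (volume.restrict Γ)) := by
    rw [integrable_prod_iff hG2meas]
    constructor
    · refine Filter.Eventually.of_forall fun k => ?_
      refine Integrable.mono' hSqInt
        ((h𝓕cont.comp (continuous_const.prodMk continuous_id)).norm.pow 2).aestronglyMeasurable ?_
      refine Filter.Eventually.of_forall fun x => ?_
      rw [Real.norm_of_nonneg (sq_nonneg _)]
      exact hG2le (k, x)
    · refine Integrable.mono' (integrable_const (∫ x in Γ, Sq x))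
        ((hG2meas.norm).integral_prod_right') ?_
      refine Filter.Eventually.of_forall fun k => ?_
      rw [Real.norm_of_nonneg (integral_nonneg fun x => norm_nonneg _)]
      by_cases hI : Integrable (fun x => ‖G2 (k, x)‖) (volume.restrict Γ)
      · refine integral_mono hI hSqInt fun x => ?_
        rw [Real.norm_of_nonneg (sq_nonneg _)]
        exact hG2le (k, x)
      · rw [integral_undef hI]
        exact hA0
  have hswap : ∫ k in Γstar, ∫ x in Γ, G2 (k, x) = ∫ x in Γ, ∫ k in Γstar, G2 (k, x) :=
    integral_integral_swap (f := fun k x => G2 (k, x)) hprodInt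
  -- Parseval pointwise in x
  have hpars : ∀ x, ∫ k in Γstar, ‖∑' ℓ : latSet a, u (x + (ℓ : EuclideanSpace ℝ (Fin d))) *
      Complex.exp (-Complex.I *
        ((inner ℝ k (x + (ℓ : EuclideanSpace ℝ (Fin d))) : ℝ) : ℂ))‖ ^ 2
      = (volume Γstar).toReal *
        ∑' ℓ : latSet a, ‖u (x + (ℓ : EuclideanSpace ℝ (Fin d)))‖ ^ 2 :=
    fun x => parseval_pointwise (latSet a) Λ hΛ Λs hΛscoe Γstar FDs hVstop u x (hsummx x)
  -- global integrability of ‖u‖²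
  have hu2int : Integrable (fun y => ‖u y‖ ^ 2) volume := by
    refine Integrable.mono' ((u.integrable (μ := volume)).norm.const_mul B)
      ((u.continuous.norm.pow 2).aestronglyMeasurable) ?_
    refine Filter.Eventually.of_forall fun y => ?_
    rw [Real.norm_of_nonneg (sq_nonneg _), sq]
    exact mul_le_mul_of_nonneg_right (hB y) (norm_nonneg _)
  -- unfolding over the fundamental domain
  set N : EuclideanSpace ℝ (Fin d) → ENNReal := fun y => (‖u y‖₊ : ENNReal) ^ 2 with hN
  have hNpt : ∀ y, (‖(‖u y‖ ^ 2 : ℝ)‖₊ : ENNReal) = N y := by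
    intro y
    show ((‖(‖u y‖ ^ 2 : ℝ)‖₊ : ENNReal)) = ((‖u y‖₊ : ENNReal)) ^ 2
    rw [nnnorm_pow, nnnorm_norm, ENNReal.coe_pow]
  have hNlt : ∫⁻ y, N y ≠ ⊤ := by
    have h2 : ∫⁻ y, (‖(‖u y‖ ^ 2 : ℝ)‖₊ : ENNReal) < ⊤ := hu2int.2
    rw [lintegral_congr hNpt] at h2
    exact h2.ne
  have hunfold : ∫ y, ‖u y‖ ^ 2
      = ∑' ℓ : latSet a, ∫ x in Γ, ‖u (x + (ℓ : EuclideanSpace ℝ (Fin d)))‖ ^ 2 := by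
    rw [FD.integral_eq_tsum'' (fun y => ‖u y‖ ^ 2) hu2int]
    rw [← eΛ.tsum_eq (fun ℓ : latSet a =>
      ∫ x in Γ, ‖u (x + (ℓ : EuclideanSpace ℝ (Fin d)))‖ ^ 2)]
    refine tsum_congr fun g => ?_
    refine integral_congr_ae (Filter.Eventually.of_forall fun x => ?_)
    show ‖u ((g : EuclideanSpace ℝ (Fin d)) + x)‖ ^ 2
      = ‖u (x + (g : EuclideanSpace ℝ (Fin d)))‖ ^ 2
    rw [add_comm]
  have hlunfold : ∑' ℓ : latSet a, ∫⁻ x in Γ, N (x + (ℓ : EuclideanSpace ℝ (Fin d))) ≠ ⊤ := by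
    rw [← eΛ.tsum_eq (fun ℓ : latSet a =>
      ∫⁻ x in Γ, N (x + (ℓ : EuclideanSpace ℝ (Fin d))))]
    have h2 : ∑' (g : Λ), ∫⁻ x in Γ, N (x + ((eΛ g : latSet a) : EuclideanSpace ℝ (Fin d)))
        = ∫⁻ y, N y := by
      rw [FD.lintegral_eq_tsum'' N]
      refine tsum_congr fun g => ?_
      refine lintegral_congr fun x => ?_
      show N (x + (g : EuclideanSpace ℝ (Fin d))) = N ((g : EuclideanSpace ℝ (Fin d)) + x)
      rw [add_comm]
    rw [show (∑' (g : Λ), (fun ℓ : latSet a =>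
        ∫⁻ x in Γ, N (x + (ℓ : EuclideanSpace ℝ (Fin d)))) (eΛ g))
      = ∑' (g : Λ), ∫⁻ x in Γ, N (x + ((eΛ g : latSet a) : EuclideanSpace ℝ (Fin d))) from rfl]
    rw [h2]
    exact hNlt
  have hswap2 : ∫ x in Γ, (∑' ℓ : latSet a, ‖u (x + (ℓ : EuclideanSpace ℝ (Fin d)))‖ ^ 2)
      = ∑' ℓ : latSet a, ∫ x in Γ, ‖u (x + (ℓ : EuclideanSpace ℝ (Fin d)))‖ ^ 2 := by
    refine integral_tsum (fun ℓ =>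
      ((u.continuous.comp (continuous_id.add continuous_const)).norm.pow 2).aestronglyMeasurable) ?_
    have hcongr : ∀ ℓ : latSet a,
        ∫⁻ x in Γ, (‖(‖u (x + (ℓ : EuclideanSpace ℝ (Fin d)))‖ ^ 2 : ℝ)‖₊ : ENNReal)
        = ∫⁻ x in Γ, N (x + (ℓ : EuclideanSpace ℝ (Fin d))) := by
      intro ℓ
      exact lintegral_congr fun x => hNpt _
    simp only [enorm_eq_nnnorm]
    rw [tsum_congr hcongr]
    exact hlunfold
  -- main computation
  have hmain : ∫ k in Γstar, ∫ x in Γ,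
      ‖∑' ℓ : latSet a, u (x + (ℓ : EuclideanSpace ℝ (Fin d))) *
        Complex.exp (-Complex.I *
          ((inner ℝ k (x + (ℓ : EuclideanSpace ℝ (Fin d))) : ℝ) : ℂ))‖ ^ 2
      = (volume Γstar).toReal * ∫ y, ‖u y‖ ^ 2 := by
    have e1 : ∀ k, (∫ x in Γ,
        ‖∑' ℓ : latSet a, u (x + (ℓ : EuclideanSpace ℝ (Fin d))) *
          Complex.exp (-Complex.I *
            ((inner ℝ k (x + (ℓ : EuclideanSpace ℝ (Fin d))) : ℝ) : ℂ))‖ ^ 2)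
        = ∫ x in Γ, G2 (k, x) := by
      intro k
      refine integral_congr_ae (Filter.Eventually.of_forall fun x => ?_)
      show ‖∑' ℓ : latSet a, u (x + (ℓ : EuclideanSpace ℝ (Fin d))) *
          Complex.exp (-Complex.I *
            ((inner ℝ k (x + (ℓ : EuclideanSpace ℝ (Fin d))) : ℝ) : ℂ))‖ ^ 2 = ‖𝓕 (k, x)‖ ^ 2
      rw [h𝓕eq k x]
    have e2 : ∀ x, ∫ k in Γstar, G2 (k, x)
        = (volume Γstar).toReal *
          ∑' ℓ : latSet a, ‖u (x + (ℓ : EuclideanSpace ℝ (Fin d)))‖ ^ 2 := by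
      intro x
      refine Eq.trans ?_ (hpars x)
      refine integral_congr_ae (Filter.Eventually.of_forall fun k => ?_)
      show ‖𝓕 (k, x)‖ ^ 2 = ‖∑' ℓ : latSet a, u (x + (ℓ : EuclideanSpace ℝ (Fin d))) *
          Complex.exp (-Complex.I *
            ((inner ℝ k (x + (ℓ : EuclideanSpace ℝ (Fin d))) : ℝ) : ℂ))‖ ^ 2
      rw [h𝓕eq k x]
    calc ∫ k in Γstar, ∫ x in Γ,
        ‖∑' ℓ : latSet a, u (x + (ℓ : EuclideanSpace ℝ (Fin d))) *
          Complex.exp (-Complex.I *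
            ((inner ℝ k (x + (ℓ : EuclideanSpace ℝ (Fin d))) : ℝ) : ℂ))‖ ^ 2
        = ∫ k in Γstar, ∫ x in Γ, G2 (k, x) :=
          integral_congr_ae (Filter.Eventually.of_forall fun k => e1 k)
      _ = ∫ x in Γ, ∫ k in Γstar, G2 (k, x) := hswap
      _ = ∫ x in Γ, (volume Γstar).toReal *
            ∑' ℓ : latSet a, ‖u (x + (ℓ : EuclideanSpace ℝ (Fin d)))‖ ^ 2 :=
          integral_congr_ae (Filter.Eventually.of_forall fun x => e2 x)
      _ = (volume Γstar).toReal * ∫ x in Γ,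
            ∑' ℓ : latSet a, ‖u (x + (ℓ : EuclideanSpace ℝ (Fin d)))‖ ^ 2 :=
          MeasureTheory.integral_const_mul _ _
      _ = (volume Γstar).toReal *
            ∑' ℓ : latSet a, ∫ x in Γ, ‖u (x + (ℓ : EuclideanSpace ℝ (Fin d)))‖ ^ 2 := by
          rw [hswap2]
      _ = (volume Γstar).toReal * ∫ y, ‖u y‖ ^ 2 := by rw [← hunfold]
  -- conclude
  have hVne : (volume Γstar).toReal ≠ 0 := ENNReal.toReal_ne_zero.mpr ⟨hVs0, hVstop⟩
  show ∫ x : EuclideanSpace ℝ (Fin d), ‖u x‖ ^ 2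
      = (1 / (volume Γstar).toReal) *
        ∫ k in Γstar, ∫ x in Γ,
          ‖∑' ℓ : latSet a, u (x + (ℓ : EuclideanSpace ℝ (Fin d))) *
            Complex.exp (-(Complex.I) *
              ((inner ℝ k (x + (ℓ : EuclideanSpace ℝ (Fin d))) : ℝ) : ℂ))‖ ^ 2
  rw [hmain, one_div, ← mul_assoc, inv_mul_cancel₀ hVne, one_mul]

end
end

section
/- Let 𝓛 ⊆ ℝ^d be a full-rank lattice and let 𝓛* be its reciprocal lattice with measurable fundamental domain Γ*. Then for every Schwartz function u : ℝ^d → ℂ and every x ∈ ℝ^d, u(x) = (1/vol(Γ*)) ∫_{Γ*} (Σ_{ℓ ∈ 𝓛} u(x + ℓ) e^{−i k·(x + ℓ)}) e^{i k·x} dk. -/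
open MeasureTheory

noncomputable section

open Pointwise

lemma summable_g : Summable (fun m : ℤ => ((1 + |(m : ℝ)|) ^ 2)⁻¹) := by
  rw [summable_int_iff_summable_nat_and_neg]
  have hbase : Summable (fun n : ℕ => (((n : ℝ) + 1) ^ 2)⁻¹) := by
    have h2 : Summable (fun n : ℕ => ((n : ℝ) ^ 2)⁻¹) :=
      Real.summable_nat_pow_inv.mpr one_lt_two
    exact (h2.comp_injective (add_left_injective 1)).congr
      (fun n => by simp only [Function.comp_apply]; push_cast; ring_nf)
  constructor
  · refine hbase.congr fun n => ?_
    simp [abs_of_nonneg, add_comm]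
  · refine hbase.congr fun n => ?_
    push_cast
    rw [abs_neg, abs_of_nonneg (by positivity : (0:ℝ) ≤ (n:ℝ))]
    ring_nf

lemma summable_pi_prod {g : ℤ → ℝ} (hg : Summable g) (hg0 : ∀ m, 0 ≤ g m) (d : ℕ) :
    Summable fun n : Fin d → ℤ => ∏ i, g (n i) := by
  induction d with
  | zero => exact Summable.of_finite
  | succ d ih =>
      have hmul : Summable (fun p : ℤ × (Fin d → ℤ) => g p.1 * ∏ i, g (p.2 i)) :=
        Summable.mul_of_nonneg (f := g) (g := fun n : Fin d → ℤ => ∏ i, g (n i)) hg ih hg0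
          (fun n => Finset.prod_nonneg fun i _ => hg0 _)
      have h2 := hmul.comp_injective (Fin.consEquiv (fun _ : Fin (d + 1) => ℤ)).symm.injective
      refine h2.congr (fun n => ?_)
      simp only [Function.comp_apply, Fin.consEquiv_symm_apply]
      rw [Fin.prod_univ_succ]; rfl

lemma schwartz_lattice_summable {d : ℕ} (a : Module.Basis (Fin d) ℝ (EuclideanSpace ℝ (Fin d)))
    (u : SchwartzMap (EuclideanSpace ℝ (Fin d)) ℂ) (x : EuclideanSpace ℝ (Fin d)) :
    Summable fun n : Fin d → ℤ => ‖u (x + ∑ i, (n i : ℝ) • a i)‖ := by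
  classical
  -- Schwartz decay
  obtain ⟨C, hC⟩ : ∃ C : ℝ, ∀ y : EuclideanSpace ℝ (Fin d), (1 + ‖y‖) ^ (2 * d) * ‖u y‖ ≤ C := by
    refine ⟨2 ^ (2 * d) * ((Finset.Iic (2 * d, 0)).sup
      (fun m => SchwartzMap.seminorm ℝ m.1 m.2)) u, fun y => ?_⟩
    have := SchwartzMap.one_add_le_sup_seminorm_apply (𝕜 := ℝ) (m := (2 * d, 0))
      (le_refl (2 * d)) (le_refl 0) u y
    simpa [norm_iteratedFDeriv_zero] using this
  -- coordinate control
  set T : EuclideanSpace ℝ (Fin d) →L[ℝ] (Fin d → ℝ) := (a.equivFunL : EuclideanSpace ℝ (Fin d) ≃L[ℝ] (Fin d → ℝ)).toContinuousLinearMap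
  set M : ℝ := ‖T‖
  set Cx : ℝ := ‖T x‖
  set K : ℝ := 1 + Cx + M
  have hK1 : 1 ≤ K := by
    have : 0 ≤ Cx := norm_nonneg _
    have : 0 ≤ M := norm_nonneg _
    simp only [K]; linarith [norm_nonneg (T x), norm_nonneg T]
  have hKpos : 0 < K := lt_of_lt_of_le one_pos hK1
  -- the key pointwise bound
  have key : ∀ n : Fin d → ℤ, ‖u (x + ∑ i, (n i : ℝ) • a i)‖ ≤
      (K ^ (2 * d) * C) * ∏ i, ((1 + |(n i : ℝ)|) ^ 2)⁻¹ := by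
    intro n
    set y : EuclideanSpace ℝ (Fin d) := x + ∑ i, (n i : ℝ) • a i with hy
    have hrepr : ∀ i, a.repr y i = a.repr x i + n i := by
      intro i
      have h0 := congrFun (Module.Basis.repr_sum_self a (fun j => (n j : ℝ))) i
      rw [hy, map_add]
      simp only [Finsupp.coe_add, Pi.add_apply]
      rw [h0]
  -- n i bound
    have hni : ∀ i, 1 + |(n i : ℝ)| ≤ K * (1 + ‖y‖) := by
      intro i
      have h1 : |(n i : ℝ)| ≤ |a.repr y i| + |a.repr x i| := by
        have := hrepr i
        have : (n i : ℝ) = a.repr y i - a.repr x i := by linarith [hrepr i]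
        rw [this]
        exact abs_sub (a.repr y i) (a.repr x i)
      have h2 : |a.repr y i| ≤ M * ‖y‖ := by
        have hle : ‖T y‖ ≤ M * ‖y‖ := T.le_opNorm y
        have : |a.repr y i| ≤ ‖T y‖ := by
          have := norm_le_pi_norm (T y) i
          simpa [T, Real.norm_eq_abs] using this
        linarith
      have h3 : |a.repr x i| ≤ Cx := by
        have := norm_le_pi_norm (T x) i
        simpa [T, Cx, Real.norm_eq_abs] using this
      have hM0 : 0 ≤ M := norm_nonneg _
      have hy0 : 0 ≤ ‖y‖ := norm_nonneg _
      have : 1 + |(n i : ℝ)| ≤ 1 + Cx + M * ‖y‖ := by linarith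
      calc 1 + |(n i : ℝ)| ≤ 1 + Cx + M * ‖y‖ := this
        _ ≤ K * (1 + ‖y‖) := by simp only [K]; nlinarith [norm_nonneg (T x)]
    -- product bound
    have hprod : ∏ i, (1 + |(n i : ℝ)|) ^ 2 ≤ (K * (1 + ‖y‖)) ^ (2 * d) := by
      calc ∏ i, (1 + |(n i : ℝ)|) ^ 2 ≤ ∏ i : Fin d, (K * (1 + ‖y‖)) ^ 2 := by
            refine Finset.prod_le_prod (fun i _ => by positivity) (fun i _ => ?_)
            exact pow_le_pow_left₀ (by positivity) (hni i) 2
        _ = (K * (1 + ‖y‖)) ^ (2 * d) := by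
            rw [Finset.prod_const, ← pow_mul, Finset.card_univ, Fintype.card_fin]

    have hprodpos : 0 < ∏ i, (1 + |(n i : ℝ)|) ^ 2 :=
      Finset.prod_pos (fun i _ => by positivity)
    -- combine
    have hmain : ‖u y‖ * ∏ i, (1 + |(n i : ℝ)|) ^ 2 ≤ K ^ (2 * d) * C := by
      calc ‖u y‖ * ∏ i, (1 + |(n i : ℝ)|) ^ 2 ≤ ‖u y‖ * (K * (1 + ‖y‖)) ^ (2 * d) :=
            mul_le_mul_of_nonneg_left hprod (norm_nonneg _)
        _ = K ^ (2 * d) * ((1 + ‖y‖) ^ (2 * d) * ‖u y‖) := by rw [mul_pow]; ring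
        _ ≤ K ^ (2 * d) * C := by
            refine mul_le_mul_of_nonneg_left (hC y) (by positivity)
    have h4 : ‖u y‖ ≤ (K ^ (2 * d) * C) / (∏ i, (1 + |(n i : ℝ)|) ^ 2) :=
      (le_div_iff₀ hprodpos).mpr hmain
    calc ‖u y‖ ≤ (K ^ (2 * d) * C) / (∏ i, (1 + |(n i : ℝ)|) ^ 2) := h4
      _ = (K ^ (2 * d) * C) * ∏ i, ((1 + |(n i : ℝ)|) ^ 2)⁻¹ := by
          rw [div_eq_mul_inv, Finset.prod_inv_distrib]
  -- conclude
  have hsum : Summable fun n : Fin d → ℤ =>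
      (K ^ (2 * d) * C) * ∏ i, ((1 + |(n i : ℝ)|) ^ 2)⁻¹ := by
    refine Summable.mul_left _ ?_
    have := summable_pi_prod (g := fun m : ℤ => ((1 + |(m : ℝ)|) ^ 2)⁻¹) summable_g
      (fun m => by positivity) d
    exact this
  exact Summable.of_nonneg_of_le (fun n => norm_nonneg _) key hsum

lemma exists_dual_basis {d : ℕ} (a : Module.Basis (Fin d) ℝ (EuclideanSpace ℝ (Fin d))) :
    ∃ b : Module.Basis (Fin d) ℝ (EuclideanSpace ℝ (Fin d)),
      ∀ i j, (inner ℝ (b i) (a j) : ℝ) = if i = j then 2 * Real.pi else 0 := by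
  classical
  have hB : (innerₗ (EuclideanSpace ℝ (Fin d)) : LinearMap.BilinForm ℝ (EuclideanSpace ℝ (Fin d))).Nondegenerate := by
    exact ⟨fun y hy => (inner_self_eq_zero (𝕜 := ℝ)).mp (hy y),
      fun y hy => (inner_self_eq_zero (𝕜 := ℝ)).mp (hy y)⟩
  set b0 := LinearMap.BilinForm.dualBasis (innerₗ (EuclideanSpace ℝ (Fin d)) : LinearMap.BilinForm ℝ (EuclideanSpace ℝ (Fin d))) hB a with hb0
  have hunit : ∀ _ : Fin d, IsUnit (2 * Real.pi) :=
    fun _ => isUnit_iff_ne_zero.mpr (by positivity)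
  refine ⟨b0.isUnitSMul hunit, fun i j => ?_⟩
  rw [Module.Basis.isUnitSMul_apply, real_inner_smul_left]
  have h := LinearMap.BilinForm.apply_dualBasis_left
    (B := (innerₗ (EuclideanSpace ℝ (Fin d)) : LinearMap.BilinForm ℝ (EuclideanSpace ℝ (Fin d)))) hB a i j
  have h' : (inner ℝ (b0 i) (a j) : ℝ) = if j = i then 1 else 0 := h
  rw [h']
  by_cases hij : i = j
  · simp [hij]
  · simp [hij, Ne.symm hij]

lemma integral_exp_eq_zero {d : ℕ} (Λ : AddSubgroup (EuclideanSpace ℝ (Fin d))) [Countable Λ]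
    (Γ : Set (EuclideanSpace ℝ (Fin d)))
    (hfund : IsAddFundamentalDomain Λ Γ volume)
    (ℓ : EuclideanSpace ℝ (Fin d)) (hℓ : ℓ ≠ 0)
    (hper : ∀ g : Λ, ∃ m : ℤ, (inner ℝ (g : EuclideanSpace ℝ (Fin d)) ℓ : ℝ) = 2 * Real.pi * m) :
    ∫ k in Γ, Complex.exp (-(Complex.I) * ((inner ℝ k ℓ : ℝ) : ℂ)) = 0 := by
  set f : EuclideanSpace ℝ (Fin d) → ℂ :=
    fun k => Complex.exp (-(Complex.I) * ((inner ℝ k ℓ : ℝ) : ℂ)) with hf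
  have hadd : ∀ g k : EuclideanSpace ℝ (Fin d),
      f (g + k) = Complex.exp (-(Complex.I) * ((inner ℝ g ℓ : ℝ) : ℂ)) * f k := by
    intro g k
    rw [hf]
    simp only
    rw [inner_add_left, ← Complex.exp_add]
    push_cast
    ring_nf
  have hf_per : ∀ (g : Λ) (k : EuclideanSpace ℝ (Fin d)), f (g +ᵥ k) = f k := by
    intro g k
    obtain ⟨m, hm⟩ := hper g
    have : f ((g : EuclideanSpace ℝ (Fin d)) + k) = _ := hadd g k
    rw [show (g +ᵥ k) = (g : EuclideanSpace ℝ (Fin d)) + k from rfl, this, hm]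
    have h1 : Complex.exp (-(Complex.I) * ((2 * Real.pi * (m : ℝ) : ℝ) : ℂ)) = 1 := by
      have := Complex.exp_int_mul_two_pi_mul_I (-m)
      rw [← this]
      congr 1
      push_cast
      ring
    rw [h1, one_mul]
  have hinner : (inner ℝ ℓ ℓ : ℝ) ≠ 0 :=
    fun h => hℓ ((inner_self_eq_zero (𝕜 := ℝ)).mp h)
  set t : EuclideanSpace ℝ (Fin d) := (Real.pi / (inner ℝ ℓ ℓ : ℝ)) • ℓ with htdef
  have ht : (inner ℝ t ℓ : ℝ) = Real.pi := by
    rw [htdef, real_inner_smul_left, div_mul_cancel₀ _ hinner]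
  set Γt : Set (EuclideanSpace ℝ (Fin d)) := (fun k => k + t) ⁻¹' Γ with hΓt
  have hmp := measurePreserving_add_right (volume : Measure (EuclideanSpace ℝ (Fin d))) t
  have hfund' : IsAddFundamentalDomain Λ Γt volume := by
    refine ⟨?_, ?_, ?_⟩
    · exact hfund.nullMeasurableSet.preimage hmp.quasiMeasurePreserving
    · have h := hmp.quasiMeasurePreserving.ae hfund.ae_covers
      refine h.mono fun k hk => ?_
      obtain ⟨g, hg⟩ := hk
      refine ⟨g, ?_⟩
      show (g : EuclideanSpace ℝ (Fin d)) + k + t ∈ Γ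
      have : (g : EuclideanSpace ℝ (Fin d)) + (k + t) ∈ Γ := hg
      rwa [← add_assoc] at this
    · intro g g' hgg'
      have hnull := hfund.aedisjoint hgg'
      have hvadd : ∀ h : Λ, (h +ᵥ Γt) = (fun k => k + t) ⁻¹' (h +ᵥ Γ) := by
        intro h
        ext k
        have hco : ∀ (w : Λ) (z : EuclideanSpace ℝ (Fin d)), w +ᵥ z = (w : EuclideanSpace ℝ (Fin d)) + z :=
          fun _ _ => rfl
        simp only [Set.mem_vadd_set_iff_neg_vadd_mem, Set.mem_preimage, hco, hΓt, add_assoc]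
      have hset : (g +ᵥ Γt) ∩ (g' +ᵥ Γt) = (fun k => k + t) ⁻¹' ((g +ᵥ Γ) ∩ (g' +ᵥ Γ)) := by
        rw [hvadd g, hvadd g', ← Set.preimage_inter]
      show volume ((g +ᵥ Γt) ∩ (g' +ᵥ Γt)) = 0
      rw [hset]
      exact hmp.quasiMeasurePreserving.preimage_null hnull
  have h1 : ∫ k in Γ, f k = ∫ k in Γt, f k := hfund.setIntegral_eq hfund' hf_per
  have h2 : ∫ k in Γt, f (k + t) = ∫ k in Γ, f k :=
    hmp.setIntegral_preimage_emb (MeasurableEquiv.addRight t).measurableEmbedding f Γ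
  have h3 : ∀ k, f (k + t) = Complex.exp (-(Complex.I) * (Real.pi : ℂ)) * f k := by
    intro k
    rw [show k + t = t + k from add_comm _ _, hadd, ht]
  have hexp : Complex.exp (-(Complex.I) * (Real.pi : ℂ)) = -1 := by
    rw [show -Complex.I * (Real.pi : ℂ) = -((Real.pi : ℂ) * Complex.I) by ring, Complex.exp_neg,
      Complex.exp_pi_mul_I]
    norm_num
  have h4 : ∫ k in Γt, f (k + t) = - ∫ k in Γt, f k := by
    calc ∫ k in Γt, f (k + t) = ∫ k in Γt, Complex.exp (-(Complex.I) * (Real.pi : ℂ)) * f k := by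
          simp only [h3]
      _ = Complex.exp (-(Complex.I) * (Real.pi : ℂ)) * ∫ k in Γt, f k := integral_const_mul _ _
      _ = - ∫ k in Γt, f k := by rw [hexp]; ring
  have : ∫ k in Γ, f k = - ∫ k in Γ, f k := by
    rw [h1, ← h4, h2, h1]
  have := add_self_eq_zero.mp (by linear_combination this)
  exact this

/-- Bloch inversion formula: a Schwartz function is recovered from its Bloch transform
`(𝓑u)(k)(x) = Σ_{ℓ ∈ L} u(x + ℓ) e^{−i k·(x+ℓ)}` by averaging over quasi-momenta. -/
theorem bloch_transform_inversion
    {d : ℕ}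
    (L : Set (EuclideanSpace ℝ (Fin d))) (hL : IsFullRankLattice L)
    (Γstar : Set (EuclideanSpace ℝ (Fin d))) (hΓstar : IsFundDomain (dualLattice L) Γstar)
    (u : SchwartzMap (EuclideanSpace ℝ (Fin d)) ℂ) (x : EuclideanSpace ℝ (Fin d)) :
    u x = (1 / ((volume Γstar).toReal : ℂ)) *
      ∫ k in Γstar,
        (∑' ℓ : L, u (x + (ℓ : EuclideanSpace ℝ (Fin d))) *
          Complex.exp (-(Complex.I) *
            ((inner ℝ k (x + (ℓ : EuclideanSpace ℝ (Fin d))) : ℝ) : ℂ))) *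
        Complex.exp (Complex.I * ((inner ℝ k x : ℝ) : ℂ)) := by
  classical
  obtain ⟨a, hLa⟩ := hL
  obtain ⟨b, hb⟩ := exists_dual_basis a
  obtain ⟨hΓmeas, hΓae⟩ := hΓstar
  -- membership lemmas
  have hmemL : ∀ ℓ : EuclideanSpace ℝ (Fin d),
      ℓ ∈ L ↔ ∃ n : Fin d → ℤ, ℓ = ∑ i, (n i : ℝ) • a i := by
    intro ℓ; rw [hLa]; rfl
  have haL : ∀ j, a j ∈ L := by
    intro j
    refine (hmemL (a j)).mpr ⟨Pi.single j 1, ?_⟩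
    rw [Finset.sum_eq_single j]
    · simp
    · intro i _ hij; simp [Pi.single_eq_of_ne hij]
    · intro h; exact absurd (Finset.mem_univ j) h
  set Λ : AddSubgroup (EuclideanSpace ℝ (Fin d)) :=
    (Submodule.span ℤ (Set.range ⇑b)).toAddSubgroup with hΛdef
  have hmemΛ : ∀ K : EuclideanSpace ℝ (Fin d),
      K ∈ Λ ↔ ∃ m : Fin d → ℤ, ∑ i, (m i) • b i = K := by
    intro K
    rw [hΛdef, Submodule.mem_toAddSubgroup, Submodule.mem_span_range_iff_exists_fun]
  -- the dual lattice is Λ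
  have hdual_eq : dualLattice L = (Λ : Set (EuclideanSpace ℝ (Fin d))) := by
    ext K
    constructor
    · intro hK
      have hcoord : ∀ j, ∃ m : ℤ, (inner ℝ K (a j) : ℝ) = 2 * Real.pi * m :=
        fun j => hK (a j) (haL j)
      choose m hm using hcoord
      have hKeq : K = ∑ i, (m i : ℝ) • b i := by
        have hinner_eq : ∀ j, (inner ℝ (K - ∑ i, (m i : ℝ) • b i) (a j) : ℝ) = 0 := by
          intro j
          rw [inner_sub_left, sum_inner]
          have hsum : ∑ i, (inner ℝ ((m i : ℝ) • b i) (a j) : ℝ) = 2 * Real.pi * m j := by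
            have : ∀ i, (inner ℝ ((m i : ℝ) • b i) (a j) : ℝ) =
                if i = j then (m i : ℝ) * (2 * Real.pi) else 0 := by
              intro i
              rw [real_inner_smul_left, hb]
              by_cases hij : i = j <;> simp [hij]
            rw [Finset.sum_congr rfl (fun i _ => this i), Finset.sum_ite_eq' Finset.univ j]
            simp [mul_comm]
          rw [hsum, hm j]; ring
        have hw : (K - ∑ i, (m i : ℝ) • b i) = 0 := by
          have hy : ∀ y : EuclideanSpace ℝ (Fin d),
              (inner ℝ (K - ∑ i, (m i : ℝ) • b i) y : ℝ) = 0 := by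
            intro y
            rw [← a.sum_repr y, inner_sum]
            refine Finset.sum_eq_zero fun j _ => ?_
            rw [real_inner_smul_right, hinner_eq j, mul_zero]
          exact (inner_self_eq_zero (𝕜 := ℝ)).mp (hy _)
        exact sub_eq_zero.mp hw
      show K ∈ Λ
      refine (hmemΛ K).mpr ⟨m, ?_⟩
      rw [hKeq]
      exact Finset.sum_congr rfl fun i _ => (Int.cast_smul_eq_zsmul ℝ (m i) (b i)).symm
    · intro hK
      obtain ⟨mc, hmK⟩ := (hmemΛ K).mp hK
      intro ℓ hℓ
      obtain ⟨n, hn⟩ := (hmemL ℓ).mp hℓ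
      refine ⟨∑ i, mc i * n i, ?_⟩
      rw [← hmK, hn, sum_inner]
      have hterm : ∀ i, (inner ℝ ((mc i) • b i) (∑ j, (n j : ℝ) • a j) : ℝ) =
          2 * Real.pi * (mc i * n i) := by
        intro i
        rw [← Int.cast_smul_eq_zsmul ℝ, real_inner_smul_left, inner_sum]
        have : ∀ j, (inner ℝ (b i) ((n j : ℝ) • a j) : ℝ) =
            if i = j then (n j : ℝ) * (2 * Real.pi) else 0 := by
          intro j
          rw [real_inner_smul_right, hb]
          by_cases hij : i = j <;> simp [hij]
        rw [Finset.sum_congr rfl (fun j _ => this j), Finset.sum_ite_eq Finset.univ i]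
        simp
        ring
      rw [Finset.sum_congr rfl (fun i _ => hterm i), ← Finset.mul_sum]
      push_cast
      ring
  -- the fundamental domain, Mathlib style
  have hfund : IsAddFundamentalDomain Λ Γstar volume := by
    have hae : ∀ᵐ y : EuclideanSpace ℝ (Fin d) ∂volume, ∃! g : Λ, g +ᵥ y ∈ Γstar := by
      refine hΓae.mono fun y hy => ?_
      obtain ⟨ℓ, ⟨hℓmem, hℓΓ⟩, huniq⟩ := hy
      have hℓΛ : ℓ ∈ Λ := by rw [hdual_eq] at hℓmem; exact hℓmem
      refine ⟨⟨-ℓ, neg_mem hℓΛ⟩, ?_, ?_⟩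
      · show -ℓ + y ∈ Γstar
        rwa [neg_add_eq_sub]
      · rintro ⟨g, hg⟩ hgy
        have h1 : -g ∈ dualLattice L := by rw [hdual_eq]; exact neg_mem hg
        have h2 : y - (-g) ∈ Γstar := by
          have : g + y ∈ Γstar := hgy
          rwa [sub_neg_eq_add, add_comm]
        have h3 := huniq (-g) ⟨h1, h2⟩
        apply Subtype.ext
        show g = -ℓ
        rw [← h3, neg_neg]
    refine ⟨hΓmeas.nullMeasurableSet, hae.mono fun y hy => hy.exists, ?_⟩
    intro g g' hgg'
    have hnull : volume {y : EuclideanSpace ℝ (Fin d) |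
        ¬ ∃! g'' : Λ, g'' +ᵥ y ∈ Γstar} = 0 := ae_iff.mp hae
    refine measure_mono_null ?_ hnull
    rintro y ⟨hy1, hy2⟩
    intro hcon
    rw [Set.mem_vadd_set_iff_neg_vadd_mem] at hy1 hy2
    exact hgg' (neg_injective ((hcon.unique hy1 hy2)))
  -- countability
  have hcount : Countable Λ := by
    have hsurj : Function.Surjective
        (fun m : Fin d → ℤ => (⟨∑ i, (m i) • b i, (hmemΛ _).mpr ⟨m, rfl⟩⟩ : Λ)) := by
      rintro ⟨K, hK⟩
      obtain ⟨m, hm⟩ := (hmemΛ K).mp hK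
      exact ⟨m, Subtype.ext hm⟩
    exact hsurj.countable
  haveI := hcount
  -- volume facts
  have hD := ZSpan.isAddFundamentalDomain' b (volume : Measure (EuclideanSpace ℝ (Fin d)))
  have hvol_eq : volume Γstar = volume (ZSpan.fundamentalDomain b) := hfund.measure_eq hD
  have hvolpos : volume Γstar ≠ 0 := by
    rw [hvol_eq]; exact ZSpan.measure_fundamentalDomain_ne_zero b
  have hvolfin : volume Γstar ≠ ⊤ := by
    rw [hvol_eq]; exact (ZSpan.fundamentalDomain_isBounded b).measure_lt_top.ne
  set V : ℝ := (volume Γstar).toReal with hVdef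
  have hV : 0 < V := ENNReal.toReal_pos hvolpos hvolfin
  -- lattice point map
  set v : (Fin d → ℤ) → EuclideanSpace ℝ (Fin d) := fun n => ∑ i, (n i : ℝ) • a i with hvdef
  have hv_inj : Function.Injective v := by
    intro n n' h
    funext i
    have h1 := congrFun (Module.Basis.repr_sum_self a (fun j => ((n j : ℝ)))) i
    have h2 := congrFun (Module.Basis.repr_sum_self a (fun j => ((n' j : ℝ)))) i
    rw [hvdef] at h
    simp only at h
    rw [h] at h1
    exact_mod_cast h1.symm.trans h2
  have hv_memL : ∀ n, v n ∈ L := fun n => (hmemL _).mpr ⟨n, rfl⟩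
  set eL : (Fin d → ℤ) ≃ L := Equiv.ofBijective (fun n => (⟨v n, hv_memL n⟩ : L))
    ⟨fun n n' h => hv_inj (congrArg Subtype.val h),
     fun ℓ => by
      obtain ⟨n, hn⟩ := (hmemL ℓ.1).mp ℓ.2
      exact ⟨n, Subtype.ext hn.symm⟩⟩ with heL
  -- the summand family
  set F : (Fin d → ℤ) → EuclideanSpace ℝ (Fin d) → ℂ :=
    fun n k => u (x + v n) * Complex.exp (-(Complex.I) * ((inner ℝ k (v n) : ℝ) : ℂ)) with hFdef
  -- pointwise identity
  have hpt : ∀ k : EuclideanSpace ℝ (Fin d),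
      (∑' ℓ : L, u (x + (ℓ : EuclideanSpace ℝ (Fin d))) *
          Complex.exp (-(Complex.I) *
            ((inner ℝ k (x + (ℓ : EuclideanSpace ℝ (Fin d))) : ℝ) : ℂ))) *
        Complex.exp (Complex.I * ((inner ℝ k x : ℝ) : ℂ)) = ∑' n : Fin d → ℤ, F n k := by
    intro k
    rw [← tsum_mul_right, ← eL.tsum_eq]
    refine tsum_congr fun n => ?_
    show u (x + v n) * Complex.exp (-(Complex.I) * ((inner ℝ k (x + v n) : ℝ) : ℂ)) *
      Complex.exp (Complex.I * ((inner ℝ k x : ℝ) : ℂ)) = F n k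
    rw [hFdef]
    simp only
    rw [mul_assoc, ← Complex.exp_add, inner_add_right]
    congr 2
    push_cast
    ring
  -- measurability
  have hmeasF : ∀ n, AEStronglyMeasurable (F n) (volume.restrict Γstar) := by
    intro n
    refine Continuous.aestronglyMeasurable ?_
    refine Continuous.mul continuous_const ?_
    exact Complex.continuous_exp.comp ((continuous_const.mul
      (Complex.continuous_ofReal.comp ((continuous_id.inner continuous_const)))))
  -- norm of the exponential
  have hnormexp : ∀ (k w : EuclideanSpace ℝ (Fin d)),
      ‖Complex.exp (-(Complex.I) * ((inner ℝ k w : ℝ) : ℂ))‖ = 1 := by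
    intro k w
    rw [show -(Complex.I) * ((inner ℝ k w : ℝ) : ℂ) = ((-(inner ℝ k w : ℝ) : ℝ) : ℂ) * Complex.I by
      push_cast; ring]
    exact Complex.norm_exp_ofReal_mul_I _
  -- summability
  have hsummable : Summable fun n : Fin d → ℤ => ‖u (x + v n)‖ :=
    schwartz_lattice_summable a u x
  -- interchange sum and integral
  have hinterchange : ∫ k in Γstar, ∑' n : Fin d → ℤ, F n k =
      ∑' n : Fin d → ℤ, ∫ k in Γstar, F n k := by
    refine integral_tsum hmeasF ?_
    have hlint : ∀ n, ∫⁻ k in Γstar, ‖F n k‖₊ ∂volume =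
        (‖u (x + v n)‖₊ : ENNReal) * volume Γstar := by
      intro n
      have : ∀ k, (‖F n k‖₊ : ENNReal) = (‖u (x + v n)‖₊ : ENNReal) := by
        intro k
        congr 1
        ext
        rw [coe_nnnorm, coe_nnnorm, hFdef]
        simp only
        rw [norm_mul, hnormexp, mul_one]
      rw [lintegral_congr this, setLIntegral_const]
    rw [show (fun n : Fin d → ℤ => ∫⁻ k, ‖F n k‖ₑ ∂(volume.restrict Γstar)) =
        fun n => (‖u (x + v n)‖₊ : ENNReal) * volume Γstar from funext hlint,
      ENNReal.tsum_mul_right]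
    refine ENNReal.mul_ne_top ?_ hvolfin
    rw [ENNReal.tsum_coe_ne_top_iff_summable]
    exact NNReal.summable_coe.mp (by simpa [coe_nnnorm] using hsummable)
  -- the individual integrals
  have hint : ∀ n : Fin d → ℤ,
      (∫ k in Γstar, F n k) = if n = 0 then (u x) * (V : ℂ) else 0 := by
    intro n
    have hconst : ∫ k in Γstar, F n k =
        u (x + v n) * ∫ k in Γstar,
          Complex.exp (-(Complex.I) * ((inner ℝ k (v n) : ℝ) : ℂ)) := by
      rw [hFdef]
      exact integral_const_mul _ _
    by_cases hn : n = 0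
    · subst hn
      have hv0 : v 0 = 0 := by rw [hvdef]; simp
      rw [hconst, hv0, if_pos rfl]
      simp only [inner_zero_right]
      rw [show ∫ k in Γstar, Complex.exp (-(Complex.I) * (((0:ℝ)) : ℂ)) = ∫ k in Γstar, (1:ℂ) by
        norm_num, setIntegral_const]
      rw [add_zero]
      rw [Complex.real_smul]
      rw [hVdef, ← measureReal_def]
      ring
    · rw [hconst]
      have hvn0 : v n ≠ 0 := by
        intro h
        apply hn
        apply hv_inj
        rw [h, hvdef]
        simp
      have hper : ∀ g : Λ, ∃ m : ℤ,
          (inner ℝ (g : EuclideanSpace ℝ (Fin d)) (v n) : ℝ) = 2 * Real.pi * m := by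
        intro g
        have hgdual : (g : EuclideanSpace ℝ (Fin d)) ∈ dualLattice L := by
          rw [hdual_eq]; exact g.2
        exact hgdual (v n) (hv_memL n)
      rw [integral_exp_eq_zero Λ Γstar hfund (v n) hvn0 hper, mul_zero, if_neg hn]
  -- final computation
  have hIfinal : (∫ k in Γstar,
      (∑' ℓ : L, u (x + (ℓ : EuclideanSpace ℝ (Fin d))) *
          Complex.exp (-(Complex.I) *
            ((inner ℝ k (x + (ℓ : EuclideanSpace ℝ (Fin d))) : ℝ) : ℂ))) *
        Complex.exp (Complex.I * ((inner ℝ k x : ℝ) : ℂ))) = u x * (V : ℂ) := by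
    calc ∫ k in Γstar,
        (∑' ℓ : L, u (x + (ℓ : EuclideanSpace ℝ (Fin d))) *
          Complex.exp (-(Complex.I) *
            ((inner ℝ k (x + (ℓ : EuclideanSpace ℝ (Fin d))) : ℝ) : ℂ))) *
        Complex.exp (Complex.I * ((inner ℝ k x : ℝ) : ℂ))
        = ∫ k in Γstar, ∑' n : Fin d → ℤ, F n k := by
          refine setIntegral_congr_fun hΓmeas fun k _ => hpt k
      _ = ∑' n : Fin d → ℤ, ∫ k in Γstar, F n k := hinterchange
      _ = ∑' n : Fin d → ℤ, (if n = 0 then (u x) * (V : ℂ) else 0) :=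
          tsum_congr fun n => hint n
      _ = u x * (V : ℂ) := tsum_ite_eq 0 _
  rw [hIfinal]
  have hVne : ((V : ℝ) : ℂ) ≠ 0 := Complex.ofReal_ne_zero.mpr hV.ne'
  field_simp
end
end

section
/- Let 𝓛 ⊆ ℝ^d be a full-rank lattice with fundamental domain Γ, let ħ > 0, write dist(z, 𝓛) = inf_{ℓ ∈ 𝓛} |z − ℓ|, and let ψ : ℝ^d → ℂ be measurable, 𝓛-periodic with ∫_Γ |ψ|² < ∞. Then ∫_Γ ∫_Γ [(πħ)^{−d/2} ∫_{ℝ^d} dist(y + z − q, 𝓛)² e^{−|z|²/ħ} dz] |ψ(q)|² |ψ(y)|² dq dy ≤ (dħ/2) (∫_Γ |ψ|²)² + ∫_Γ ∫_Γ dist(y − q, 𝓛)² |ψ(q)|² |ψ(y)|² dq dy. -/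
open MeasureTheory

noncomputable section

open Real

noncomputable section GSCAux

lemma integrable_sq_mul_exp {b : ℝ} (hb : 0 < b) :
    Integrable (fun x : ℝ => x ^ 2 * Real.exp (-b * x ^ 2)) := by
  have := integrable_rpow_mul_exp_neg_mul_sq hb (s := 2) (by norm_num)
  refine this.congr ?_
  filter_upwards with x
  rw [show ((2:ℝ)) = ((2:ℕ):ℝ) by norm_num, Real.rpow_natCast]

lemma integral_sq_mul_exp {b : ℝ} (hb : 0 < b) :
    ∫ x : ℝ, x ^ 2 * Real.exp (-b * x ^ 2) = (2 * b)⁻¹ * Real.sqrt (π / b) := by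
  have hu : ∀ x : ℝ, HasDerivAt (fun x : ℝ => x) 1 x := fun x => hasDerivAt_id x
  have hv : ∀ x : ℝ, HasDerivAt (fun x : ℝ => -(2 * b)⁻¹ * Real.exp (-b * x ^ 2))
      (x * Real.exp (-b * x ^ 2)) x := by
    intro x
    have h1 : HasDerivAt (fun x : ℝ => -b * x ^ 2) (-b * (2 * x)) x := by
      simpa using ((hasDerivAt_pow 2 x).const_mul (-b))
    have := (h1.exp).const_mul (-(2 * b)⁻¹)
    refine this.congr_deriv ?_
    field_simp
  have huv' : Integrable ((fun x : ℝ => x) * fun x => x * Real.exp (-b * x ^ 2)) := by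
    have := integrable_sq_mul_exp hb
    refine this.congr ?_
    filter_upwards with x; simp [Pi.mul_apply]; ring
  have hu'v : Integrable ((fun _ : ℝ => (1:ℝ)) * fun x => -(2 * b)⁻¹ * Real.exp (-b * x ^ 2)) := by
    refine (((integrable_exp_neg_mul_sq hb).const_mul (-(2 * b)⁻¹)).congr ?_)
    filter_upwards with x; simp [Pi.mul_apply]
  have huv : Integrable ((fun x : ℝ => x) * fun x => -(2 * b)⁻¹ * Real.exp (-b * x ^ 2)) := by
    refine ((integrable_mul_exp_neg_mul_sq hb).const_mul (-(2 * b)⁻¹)).congr ?_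
    filter_upwards with x; simp [Pi.mul_apply]; ring
  have key := integral_mul_deriv_eq_deriv_mul_of_integrable (fun x _ => hu x) (fun x _ => hv x) huv' hu'v huv
  have : ∫ x : ℝ, x * (x * Real.exp (-b * x ^ 2)) = ∫ x : ℝ, x ^ 2 * Real.exp (-b * x ^ 2) := by
    congr 1; ext x; ring
  rw [this] at key
  rw [key]
  simp only [one_mul]
  rw [MeasureTheory.integral_const_mul, integral_gaussian]
  ring


variable {d : ℕ}

lemma norm_symm_sq (x : Fin d → ℝ) :
    ‖WithLp.toLp 2 x‖ ^ 2 = ∑ i, x i ^ 2 := by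
  simp only [EuclideanSpace.norm_eq, PiLp.toLp_apply, Real.norm_eq_abs, sq_abs]
  rw [sq_sqrt]
  exact Finset.sum_nonneg fun i _ => by positivity

lemma integral_exp_E {b : ℝ} (hb : 0 < b) :
    ∫ v : EuclideanSpace ℝ (Fin d), Real.exp (-b * ‖v‖ ^ 2)
      = (∫ x : ℝ, Real.exp (-b * x ^ 2)) ^ d := by
  rw [← (PiLp.volume_preserving_toLp (Fin d)).integral_comp
    (MeasurableEquiv.toLp 2 (Fin d → ℝ)).measurableEmbedding]
  have : ∀ x : Fin d → ℝ, Real.exp (-b * ‖WithLp.toLp 2 x‖ ^ 2)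
      = ∏ i, Real.exp (-b * x i ^ 2) := by
    intro x
    rw [norm_symm_sq, ← Real.exp_sum]
    congr 1
    rw [Finset.mul_sum]
  simp_rw [this]
  rw [integral_fintype_prod_volume_eq_pow (ι := Fin d) (fun t : ℝ => Real.exp (-b * t ^ 2))]
  simp

lemma integral_normsq_exp_E {b : ℝ} (hb : 0 < b) :
    ∫ v : EuclideanSpace ℝ (Fin d), ‖v‖ ^ 2 * Real.exp (-b * ‖v‖ ^ 2)
      = (d : ℝ) * (2 * b)⁻¹ * (∫ x : ℝ, Real.exp (-b * x ^ 2)) ^ d := by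
  rw [← (PiLp.volume_preserving_toLp (Fin d)).integral_comp
    (MeasurableEquiv.toLp 2 (Fin d → ℝ)).measurableEmbedding]
  have hexp : ∀ x : Fin d → ℝ,
      ‖WithLp.toLp 2 x‖ ^ 2 *
        Real.exp (-b * ‖WithLp.toLp 2 x‖ ^ 2)
      = ∑ i, ∏ j, ((if j = i then x j ^ 2 else 1) * Real.exp (-b * x j ^ 2)) := by
    intro x
    rw [norm_symm_sq, Finset.sum_mul]
    refine Finset.sum_congr rfl fun i _ => ?_
    rw [Finset.prod_mul_distrib, Finset.prod_ite_eq' Finset.univ i (fun j => x j ^ 2),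
      ← Real.exp_sum]
    simp [Finset.mul_sum]
  simp_rw [hexp]
  rw [integral_finset_sum]
  · have hterm : ∀ i : Fin d,
        (∫ x : Fin d → ℝ, ∏ j, ((if j = i then x j ^ 2 else 1) * Real.exp (-b * x j ^ 2)))
        = (2 * b)⁻¹ * (∫ x : ℝ, Real.exp (-b * x ^ 2)) ^ d := by
      intro i
      rw [integral_fintype_prod_volume_eq_prod
        (fun j (t : ℝ) => (if j = i then t ^ 2 else 1) * Real.exp (-b * t ^ 2))]
      have hfac : ∀ j : Fin d,
          (∫ t : ℝ, (if j = i then t ^ 2 else 1) * Real.exp (-b * t ^ 2))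
          = (if j = i then (2 * b)⁻¹ else 1) * ∫ x : ℝ, Real.exp (-b * x ^ 2) := by
        intro j
        by_cases h : j = i
        · simp only [h, if_true]
          rw [integral_sq_mul_exp hb, integral_gaussian]
        · simp only [h, if_false, one_mul]
      simp_rw [hfac]
      rw [Finset.prod_mul_distrib, Finset.prod_ite_eq' Finset.univ i (fun _ => (2 * b)⁻¹),
        Finset.prod_const]
      simp
    simp_rw [hterm]
    rw [Finset.sum_const]
    simp [mul_assoc]
  · intro i _
    refine Integrable.fintype_prod
      (f := fun j (t : ℝ) => (if j = i then t ^ 2 else 1) * Real.exp (-b * t ^ 2)) (fun j => ?_)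
    by_cases h : j = i <;> simp only [h, if_pos, if_true, if_neg, if_false, one_mul]
    · exact integrable_sq_mul_exp hb
    · simpa using integrable_exp_neg_mul_sq hb


lemma integrable_exp_E (hb : 0 < b) :
    Integrable (fun v : EuclideanSpace ℝ (Fin d) => Real.exp (-b * ‖v‖ ^ 2)) := by
  have h := (GaussianFourier.integrable_cexp_neg_mul_sq_norm_add_of_euclideanSpace (ι := Fin d)
    (b := (b : ℂ)) (by simpa using hb) 0 0).norm
  refine h.congr (Filter.Eventually.of_forall fun v => ?_)
  simp only [Complex.norm_exp]
  norm_num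
  left
  rw [← Complex.ofReal_pow]
  exact Complex.ofReal_re _

lemma integrable_normsq_exp_E (hb : 0 < b) :
    Integrable (fun v : EuclideanSpace ℝ (Fin d) => ‖v‖ ^ 2 * Real.exp (-b * ‖v‖ ^ 2)) := by
  refine Integrable.mono' (((integrable_exp_E (half_pos hb)).const_mul (2 / b)))
    (Continuous.aestronglyMeasurable (by continuity)) (Filter.Eventually.of_forall fun v => ?_)
  set t : ℝ := ‖v‖ ^ 2 with ht
  have htn : 0 ≤ t := by positivity
  have h1 : b / 2 * t ≤ Real.exp (b / 2 * t) := by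
    nlinarith [Real.add_one_le_exp (b / 2 * t), Real.exp_pos (b / 2 * t)]
  have h2 : t ≤ 2 / b * Real.exp (b / 2 * t) := by
    rw [div_mul_eq_mul_div, le_div_iff₀ hb]
    nlinarith
  have h3 : Real.exp (b / 2 * t) * Real.exp (-b * t) = Real.exp (-(b / 2) * t) := by
    rw [← Real.exp_add]; ring_nf
  rw [Real.norm_of_nonneg (by positivity)]
  calc t * Real.exp (-b * t) ≤ 2 / b * Real.exp (b / 2 * t) * Real.exp (-b * t) :=
        mul_le_mul_of_nonneg_right h2 (Real.exp_pos _).le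
    _ = 2 / b * Real.exp (-(b / 2) * t) := by rw [mul_assoc, h3]

lemma integrable_norm_exp_E (hb : 0 < b) :
    Integrable (fun v : EuclideanSpace ℝ (Fin d) => ‖v‖ * Real.exp (-b * ‖v‖ ^ 2)) := by
  refine Integrable.mono' ((integrable_exp_E hb).add (integrable_normsq_exp_E hb))
    (Continuous.aestronglyMeasurable (by continuity)) (Filter.Eventually.of_forall fun v => ?_)
  rw [Real.norm_of_nonneg (by positivity)]
  have : ‖v‖ ≤ 1 + ‖v‖ ^ 2 := by nlinarith [norm_nonneg v, sq_nonneg (‖v‖ - 1)]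
  simp only [Pi.add_apply]
  nlinarith [Real.exp_pos (-b * ‖v‖ ^ 2), mul_le_mul_of_nonneg_right this
    (Real.exp_pos (-b * ‖v‖ ^ 2)).le]

lemma integrable_inner_exp_E (hb : 0 < b) (x : EuclideanSpace ℝ (Fin d)) :
    Integrable (fun v : EuclideanSpace ℝ (Fin d) =>
      (inner ℝ x v : ℝ) * Real.exp (-b * ‖v‖ ^ 2)) := by
  refine Integrable.mono' ((integrable_norm_exp_E hb).const_mul ‖x‖)
    (Continuous.aestronglyMeasurable ((continuous_const.inner continuous_id).mul
      (Real.continuous_exp.comp (continuous_const.mul (continuous_norm.pow 2)))))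
    (Filter.Eventually.of_forall fun v => ?_)
  rw [Real.norm_eq_abs, abs_mul, abs_of_nonneg (Real.exp_pos _).le, ← mul_assoc]
  exact mul_le_mul_of_nonneg_right
    (by simpa using abs_real_inner_le_norm x v) (Real.exp_pos _).le

lemma integral_inner_exp_E_zero (x : EuclideanSpace ℝ (Fin d)) :
    ∫ v : EuclideanSpace ℝ (Fin d), (inner ℝ x v : ℝ) * Real.exp (-b * ‖v‖ ^ 2) = 0 := by
  have h := integral_neg_eq_self
    (fun v : EuclideanSpace ℝ (Fin d) => (inner ℝ x v : ℝ) * Real.exp (-b * ‖v‖ ^ 2)) volume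
  simp only [inner_neg_right, norm_neg] at h
  have h2 : ∫ v : EuclideanSpace ℝ (Fin d), (-(inner ℝ x v : ℝ)) * Real.exp (-b * ‖v‖ ^ 2)
      = - ∫ v : EuclideanSpace ℝ (Fin d), (inner ℝ x v : ℝ) * Real.exp (-b * ‖v‖ ^ 2) := by
    simp_rw [neg_mul]
    exact integral_neg _
  rw [h2] at h
  linarith

variable {b : ℝ}

lemma integrable_shift_E (hb : 0 < b) (x : EuclideanSpace ℝ (Fin d)) :
    Integrable (fun v : EuclideanSpace ℝ (Fin d) =>
      ‖x + v‖ ^ 2 * Real.exp (-b * ‖v‖ ^ 2)) := by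
  have h := (((integrable_exp_E (d := d) hb).const_mul (‖x‖ ^ 2)).add
      ((integrable_inner_exp_E hb x).const_mul 2)).add (integrable_normsq_exp_E hb)
  refine h.congr (Filter.Eventually.of_forall fun v => ?_)
  simp only [Pi.add_apply]
  rw [norm_add_sq_real]
  ring

lemma integral_shift_E (hb : 0 < b) (x : EuclideanSpace ℝ (Fin d)) :
    ∫ v : EuclideanSpace ℝ (Fin d), ‖x + v‖ ^ 2 * Real.exp (-b * ‖v‖ ^ 2)
      = (‖x‖ ^ 2 + (d : ℝ) * (2 * b)⁻¹) * (∫ t : ℝ, Real.exp (-b * t ^ 2)) ^ d := by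
  have hcongr : ∀ v : EuclideanSpace ℝ (Fin d),
      ‖x + v‖ ^ 2 * Real.exp (-b * ‖v‖ ^ 2)
      = ‖x‖ ^ 2 * Real.exp (-b * ‖v‖ ^ 2)
        + 2 * ((inner ℝ x v : ℝ) * Real.exp (-b * ‖v‖ ^ 2))
        + ‖v‖ ^ 2 * Real.exp (-b * ‖v‖ ^ 2) := by
    intro v
    rw [norm_add_sq_real]
    ring
  simp_rw [hcongr]
  have e1 : Integrable (fun v : EuclideanSpace ℝ (Fin d) =>
      ‖x‖ ^ 2 * Real.exp (-b * ‖v‖ ^ 2)) := (integrable_exp_E hb).const_mul _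
  have e2 : Integrable (fun v : EuclideanSpace ℝ (Fin d) =>
      2 * ((inner ℝ x v : ℝ) * Real.exp (-b * ‖v‖ ^ 2))) :=
    (integrable_inner_exp_E hb x).const_mul 2
  have e12 : Integrable (fun v : EuclideanSpace ℝ (Fin d) =>
      ‖x‖ ^ 2 * Real.exp (-b * ‖v‖ ^ 2)
        + 2 * ((inner ℝ x v : ℝ) * Real.exp (-b * ‖v‖ ^ 2))) := e1.add e2
  rw [integral_add e12 (integrable_normsq_exp_E hb), integral_add e1 e2,
    MeasureTheory.integral_const_mul, MeasureTheory.integral_const_mul,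
    integral_inner_exp_E_zero, integral_exp_E hb, integral_normsq_exp_E hb]
  ring


lemma lattice_nonempty {d : ℕ} {L : Set (EuclideanSpace ℝ (Fin d))}
    (hL : IsFullRankLattice L) : L.Nonempty := by
  obtain ⟨a, rfl⟩ := hL
  exact ⟨0, 0, by simp⟩

lemma lattice_infDist_bdd {d : ℕ} {L : Set (EuclideanSpace ℝ (Fin d))}
    (hL : IsFullRankLattice L) :
    ∃ C : ℝ, 0 ≤ C ∧ ∀ x : EuclideanSpace ℝ (Fin d), Metric.infDist x L ≤ C := by
  obtain ⟨a, rfl⟩ := hL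
  refine ⟨∑ i, ‖a i‖, Finset.sum_nonneg fun i _ => norm_nonneg _, fun x => ?_⟩
  set r : Fin d → ℝ := fun i => a.repr x i with hr
  have hmem : (∑ i, ((⌊r i⌋ : ℤ) : ℝ) • a i) ∈
      {z | ∃ n : Fin d → ℤ, z = ∑ i, (n i : ℝ) • a i} := ⟨fun i => ⌊r i⌋, rfl⟩
  refine (Metric.infDist_le_dist_of_mem hmem).trans ?_
  rw [dist_eq_norm]
  have hx : x = ∑ i, r i • a i := (a.sum_repr x).symm
  have hdiff : x - (∑ i, ((⌊r i⌋ : ℤ) : ℝ) • a i) = ∑ i, (Int.fract (r i)) • a i := by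
    rw [hx, ← Finset.sum_sub_distrib]
    congr 1
    ext i
    rw [← sub_smul, Int.self_sub_floor]
  rw [hdiff]
  refine (norm_sum_le _ _).trans (Finset.sum_le_sum fun i _ => ?_)
  rw [norm_smul, Real.norm_eq_abs, abs_of_nonneg (Int.fract_nonneg _)]
  calc Int.fract (r i) * ‖a i‖ ≤ 1 * ‖a i‖ :=
        mul_le_mul_of_nonneg_right (Int.fract_lt_one _).le (norm_nonneg _)
    _ = ‖a i‖ := one_mul _

lemma normalization {d : ℕ} {hbar : ℝ} (hh : 0 < hbar) :
    (Real.pi * hbar) ^ (-(d : ℝ) / 2) * (∫ t : ℝ, Real.exp (-hbar⁻¹ * t ^ 2)) ^ d = 1 := by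
  have hpos : 0 < Real.pi * hbar := mul_pos Real.pi_pos hh
  rw [integral_gaussian]
  have h1 : Real.pi / hbar⁻¹ = Real.pi * hbar := by field_simp
  rw [h1]
  have h2 : Real.sqrt (Real.pi * hbar) ^ d = (Real.pi * hbar) ^ ((d : ℝ) / 2) := by
    rw [Real.sqrt_eq_rpow, ← Real.rpow_natCast ((Real.pi * hbar) ^ ((1:ℝ)/2)) d,
      ← Real.rpow_mul hpos.le]
    congr 1
    push_cast
    ring
  rw [h2, ← Real.rpow_add hpos, show -(d:ℝ)/2 + (d:ℝ)/2 = 0 by ring, Real.rpow_zero]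

lemma pointwise_bound {d : ℕ} {hbar : ℝ} (hh : 0 < hbar)
    {L : Set (EuclideanSpace ℝ (Fin d))} (hL : IsFullRankLattice L)
    (x : EuclideanSpace ℝ (Fin d)) :
    (Real.pi * hbar) ^ (-(d : ℝ) / 2) *
      (∫ z : EuclideanSpace ℝ (Fin d),
        Metric.infDist (x + z) L ^ 2 * Real.exp (-‖z‖ ^ 2 / hbar))
      ≤ (d : ℝ) * hbar / 2 + Metric.infDist x L ^ 2 := by
  have hb : 0 < hbar⁻¹ := inv_pos.mpr hh
  have hexp : ∀ z : EuclideanSpace ℝ (Fin d),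
      Real.exp (-‖z‖ ^ 2 / hbar) = Real.exp (-hbar⁻¹ * ‖z‖ ^ 2) := by
    intro z; congr 1; field_simp
  simp_rw [hexp]
  have hcpos : (0:ℝ) < (Real.pi * hbar) ^ (-(d : ℝ) / 2) :=
    Real.rpow_pos_of_pos (mul_pos Real.pi_pos hh) _
  have hne := lattice_nonempty hL
  -- bound for each lattice point
  have claim : ∀ ℓ ∈ L,
      (Real.pi * hbar) ^ (-(d : ℝ) / 2) *
        (∫ z : EuclideanSpace ℝ (Fin d),
          Metric.infDist (x + z) L ^ 2 * Real.exp (-hbar⁻¹ * ‖z‖ ^ 2))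
      ≤ ‖x - ℓ‖ ^ 2 + (d : ℝ) * hbar / 2 := by
    intro ℓ hℓ
    have hmono : (∫ z : EuclideanSpace ℝ (Fin d),
        Metric.infDist (x + z) L ^ 2 * Real.exp (-hbar⁻¹ * ‖z‖ ^ 2))
        ≤ ∫ z : EuclideanSpace ℝ (Fin d), ‖(x - ℓ) + z‖ ^ 2 * Real.exp (-hbar⁻¹ * ‖z‖ ^ 2) := by
      refine integral_mono_of_nonneg (Filter.Eventually.of_forall fun z => by positivity)
        (integrable_shift_E hb (x - ℓ)) (Filter.Eventually.of_forall fun z => ?_)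
      have h1 : Metric.infDist (x + z) L ≤ ‖(x - ℓ) + z‖ := by
        refine (Metric.infDist_le_dist_of_mem hℓ).trans_eq ?_
        rw [dist_eq_norm, add_sub_right_comm]
      exact mul_le_mul_of_nonneg_right
        (pow_le_pow_left₀ Metric.infDist_nonneg h1 2) (Real.exp_pos _).le
    have hval := integral_shift_E hb (x - ℓ)
    calc (Real.pi * hbar) ^ (-(d : ℝ) / 2) *
          (∫ z : EuclideanSpace ℝ (Fin d),
            Metric.infDist (x + z) L ^ 2 * Real.exp (-hbar⁻¹ * ‖z‖ ^ 2))
        ≤ (Real.pi * hbar) ^ (-(d : ℝ) / 2) *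
          ∫ z : EuclideanSpace ℝ (Fin d), ‖(x - ℓ) + z‖ ^ 2 * Real.exp (-hbar⁻¹ * ‖z‖ ^ 2) :=
          mul_le_mul_of_nonneg_left hmono hcpos.le
      _ = (‖x - ℓ‖ ^ 2 + (d : ℝ) * (2 * hbar⁻¹)⁻¹) *
          ((Real.pi * hbar) ^ (-(d : ℝ) / 2) * (∫ t : ℝ, Real.exp (-hbar⁻¹ * t ^ 2)) ^ d) := by
          rw [hval]; ring
      _ = ‖x - ℓ‖ ^ 2 + (d : ℝ) * hbar / 2 := by
          rw [normalization hh]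
          have : (2 * hbar⁻¹)⁻¹ = hbar / 2 := by field_simp
          rw [this]; ring
  -- pass to the infimum
  refine le_of_forall_pos_le_add fun ε hε => ?_
  set I := Metric.infDist x L with hI
  have hInn : 0 ≤ I := Metric.infDist_nonneg
  set δ : ℝ := min 1 (ε / (2 * I + 1)) with hδ
  have hδpos : 0 < δ := lt_min one_pos (div_pos hε (by linarith))
  obtain ⟨ℓ, hℓL, hdist⟩ := (Metric.infDist_lt_iff hne).mp (lt_add_of_pos_right I hδpos)
  have hcl := claim ℓ hℓL
  rw [← dist_eq_norm] at hcl
  have hd0 : 0 ≤ dist x ℓ := dist_nonneg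
  have hδ1 : δ ≤ 1 := min_le_left _ _
  have hδ2 : δ ≤ ε / (2 * I + 1) := min_le_right _ _
  have hδ3 : (2 * I + 1) * δ ≤ ε := by
    rw [← le_div_iff₀' (by linarith : (0:ℝ) < 2 * I + 1)]
    exact hδ2
  nlinarith [sq_nonneg (dist x ℓ - I)]

end GSCAux

/-- Bound on the position part of the transportation cost between a periodic pure state
and its Husimi density: the Gaussian-smoothed squared lattice distance, averaged against
the periodic densities `|ψ(q)|² |ψ(y)|²`, exceeds the unsmoothed one by at most `dħ/2`
times the squared mass. -/
theorem gaussian_smoothed_cost_bound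
    {d : ℕ} (hbar : ℝ) (hhbar : 0 < hbar)
    (L : Set (EuclideanSpace ℝ (Fin d))) (hL : IsFullRankLattice L)
    (Γ : Set (EuclideanSpace ℝ (Fin d))) (hΓ : IsFundDomain L Γ)
    (ψ : EuclideanSpace ℝ (Fin d) → ℂ) (hψmeas : Measurable ψ)
    (hψper : ∀ y : EuclideanSpace ℝ (Fin d), ∀ ℓ ∈ L, ψ (y + ℓ) = ψ y)
    (hψL2 : IntegrableOn (fun y => ‖ψ y‖ ^ 2) Γ volume) :
    ∫ y in Γ, ∫ q in Γ,
        ((Real.pi * hbar) ^ (-(d : ℝ) / 2) *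
          ∫ z : EuclideanSpace ℝ (Fin d),
            Metric.infDist (y + z - q) L ^ 2 * Real.exp (-‖z‖ ^ 2 / hbar)) *
          (‖ψ q‖ ^ 2 * ‖ψ y‖ ^ 2)
      ≤ (d : ℝ) * hbar / 2 * (∫ y in Γ, ‖ψ y‖ ^ 2) ^ 2 +
        ∫ y in Γ, ∫ q in Γ,
          Metric.infDist (y - q) L ^ 2 * (‖ψ q‖ ^ 2 * ‖ψ y‖ ^ 2) := by
  classical
  set w : EuclideanSpace ℝ (Fin d) → ℝ := fun q => ‖ψ q‖ ^ 2 with hw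
  have hwmeas : Measurable w := (hψmeas.norm).pow_const 2
  have hw0 : ∀ q, 0 ≤ w q := fun q => by positivity
  have hwint : Integrable w (volume.restrict Γ) := hψL2
  set M : ℝ := ∫ q in Γ, w q with hM
  set K : ℝ := (d : ℝ) * hbar / 2 with hK
  have hK0 : 0 ≤ K := by positivity
  obtain ⟨C, hC0, hCb⟩ := lattice_infDist_bdd hL
  set B : EuclideanSpace ℝ (Fin d) → EuclideanSpace ℝ (Fin d) → ℝ := fun y q => Metric.infDist (y - q) L ^ 2 with hB
  have hB0 : ∀ y q, 0 ≤ B y q := fun y q => by positivity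
  have hBbd : ∀ y q, B y q ≤ C ^ 2 := fun y q =>
    pow_le_pow_left₀ Metric.infDist_nonneg (hCb _) 2
  have hBm : Measurable fun p : (EuclideanSpace ℝ (Fin d)) × (EuclideanSpace ℝ (Fin d)) => B p.1 p.2 :=
    (((Metric.continuous_infDist_pt L).comp
      (continuous_fst.sub continuous_snd)).measurable).pow_const 2
  set F : EuclideanSpace ℝ (Fin d) → EuclideanSpace ℝ (Fin d) → ℝ := fun y q =>
    (Real.pi * hbar) ^ (-(d : ℝ) / 2) *
      ∫ z : EuclideanSpace ℝ (Fin d), Metric.infDist (y + z - q) L ^ 2 * Real.exp (-‖z‖ ^ 2 / hbar) with hF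
  have hcpos : (0:ℝ) < (Real.pi * hbar) ^ (-(d : ℝ) / 2) :=
    Real.rpow_pos_of_pos (mul_pos Real.pi_pos hhbar) _
  have hF0 : ∀ y q, 0 ≤ F y q := fun y q =>
    mul_nonneg hcpos.le (integral_nonneg fun z => by positivity)
  have hFB : ∀ y q, F y q ≤ K + B y q := by
    intro y q
    have hrw : (∫ z : EuclideanSpace ℝ (Fin d), Metric.infDist (y + z - q) L ^ 2 * Real.exp (-‖z‖ ^ 2 / hbar))
        = ∫ z : EuclideanSpace ℝ (Fin d), Metric.infDist ((y - q) + z) L ^ 2 * Real.exp (-‖z‖ ^ 2 / hbar) := by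
      congr 1; ext z; rw [add_sub_right_comm]
    rw [hF]
    simp only
    rw [hrw]
    exact pointwise_bound hhbar hL (y - q)
  -- product integrability
  have hprod : Integrable (fun p : (EuclideanSpace ℝ (Fin d)) × (EuclideanSpace ℝ (Fin d)) => w p.2 * w p.1)
      ((volume.restrict Γ).prod (volume.restrict Γ)) := by
    refine (hwint.mul_prod hwint).congr ?_
    filter_upwards with p using mul_comm _ _
  have hH : Integrable (fun p : (EuclideanSpace ℝ (Fin d)) × (EuclideanSpace ℝ (Fin d)) => (K + B p.1 p.2) * (w p.2 * w p.1))
      ((volume.restrict Γ).prod (volume.restrict Γ)) := by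
    refine hprod.bdd_mul ((measurable_const.add hBm).aestronglyMeasurable)
      (c := K + C ^ 2) (Filter.Eventually.of_forall fun p => ?_)
    rw [Real.norm_of_nonneg (by positivity)]
    exact add_le_add le_rfl (hBbd _ _)
  have hHB : Integrable (fun p : (EuclideanSpace ℝ (Fin d)) × (EuclideanSpace ℝ (Fin d)) => B p.1 p.2 * (w p.2 * w p.1))
      ((volume.restrict Γ).prod (volume.restrict Γ)) := by
    refine hprod.bdd_mul (hBm.aestronglyMeasurable) (c := C ^ 2) (Filter.Eventually.of_forall fun p => ?_)
    rw [Real.norm_of_nonneg (by positivity)]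
    exact hBbd _ _
  have hg : Integrable (fun y => ∫ q in Γ, (K + B y q) * (w q * w y))
      (volume.restrict Γ) := hH.integral_prod_left
  have hgB : Integrable (fun y => ∫ q in Γ, B y q * (w q * w y))
      (volume.restrict Γ) := hHB.integral_prod_left
  -- per-y integrability in q
  have hqint : ∀ y, Integrable (fun q => (K + B y q) * (w q * w y))
      (volume.restrict Γ) := by
    intro y
    have h1 : Integrable (fun q => (K + B y q) * w q) (volume.restrict Γ) := by
      refine hwint.bdd_mul ((measurable_const.add
        ((((Metric.continuous_infDist_pt L).comp
          (continuous_const.sub continuous_id)).measurable).pow_const 2))).aestronglyMeasurable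
        (c := K + C ^ 2) (Filter.Eventually.of_forall fun q => ?_)
      rw [Real.norm_of_nonneg (by positivity)]
      exact add_le_add le_rfl (hBbd _ _)
    refine (h1.mul_const (w y)).congr ?_
    filter_upwards with q using by ring
  have hqintK : ∀ y, Integrable (fun q => K * (w q * w y)) (volume.restrict Γ) := by
    intro y
    refine ((hwint.mul_const (w y)).const_mul K).congr ?_
    filter_upwards with q using by ring
  have hqintB : ∀ y, Integrable (fun q => B y q * (w q * w y)) (volume.restrict Γ) := by
    intro y
    have h1 : Integrable (fun q => B y q * w q) (volume.restrict Γ) := by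
      refine hwint.bdd_mul ((((Metric.continuous_infDist_pt L).comp
          (continuous_const.sub continuous_id)).measurable).pow_const 2).aestronglyMeasurable
        (c := C ^ 2) (Filter.Eventually.of_forall fun q => ?_)
      rw [Real.norm_of_nonneg (by positivity)]
      exact hBbd _ _
    refine (h1.mul_const (w y)).congr ?_
    filter_upwards with q using by ring
  -- step 1 : inner monotonicity
  have step1 : ∀ y, (∫ q in Γ, F y q * (w q * w y))
      ≤ ∫ q in Γ, (K + B y q) * (w q * w y) := by
    intro y
    refine integral_mono_of_nonneg (Filter.Eventually.of_forall fun q =>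
      mul_nonneg (hF0 y q) (mul_nonneg (hw0 q) (hw0 y))) (hqint y)
      (Filter.Eventually.of_forall fun q => ?_)
    exact mul_le_mul_of_nonneg_right (hFB y q) (mul_nonneg (hw0 q) (hw0 y))
  -- step 2 : outer monotonicity
  have step2 : (∫ y in Γ, ∫ q in Γ, F y q * (w q * w y))
      ≤ ∫ y in Γ, ∫ q in Γ, (K + B y q) * (w q * w y) := by
    refine integral_mono_of_nonneg (Filter.Eventually.of_forall fun y =>
      integral_nonneg fun q => mul_nonneg (hF0 y q) (mul_nonneg (hw0 q) (hw0 y))) hg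
      (Filter.Eventually.of_forall fun y => step1 y)
  -- step 3 : compute the RHS
  have hsplit : ∀ y, (∫ q in Γ, (K + B y q) * (w q * w y))
      = K * w y * M + ∫ q in Γ, B y q * (w q * w y) := by
    intro y
    have : (fun q => (K + B y q) * (w q * w y))
        = fun q => K * (w q * w y) + B y q * (w q * w y) := by
      funext q; ring
    rw [this, integral_add (hqintK y) (hqintB y)]
    congr 1
    have : (fun q => K * (w q * w y)) = fun q => (K * w y) * w q := by
      funext q; ring
    rw [this, MeasureTheory.integral_const_mul]
    try rw [hM]
    try ring
  have step3 : (∫ y in Γ, ∫ q in Γ, (K + B y q) * (w q * w y))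
      = K * M ^ 2 + ∫ y in Γ, ∫ q in Γ, B y q * (w q * w y) := by
    simp_rw [hsplit]
    rw [integral_add (((hwint.const_mul K).mul_const M).congr
      (Filter.Eventually.of_forall fun y => by ring)) hgB]
    congr 1
    have : (fun y => K * w y * M) = fun y => (K * M) * w y := by funext y; ring
    rw [this, MeasureTheory.integral_const_mul]
    try rw [hM]
    try ring
  calc (∫ y in Γ, ∫ q in Γ, F y q * (w q * w y)) ≤ _ := step2
    _ = K * M ^ 2 + ∫ y in Γ, ∫ q in Γ, B y q * (w q * w y) := step3
end
end
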